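/- arXiv:0903.3117 — 4 statements merged into one kernel-verified Lean document; each statement's English description precedes it below -/
import Mathlib

section
/- Assume the Ornstein-Uhlenbeck hypotheses: Q, B : ℝ → ℝ^{N×N} with entries q_{ij} ∈ C_b^1(ℝ), b_{ij} ∈ C_b(ℝ), Q(s) symmetric with ⟨Q(s)ξ, ξ⟩ ≥ η₀|ξ|² for some η₀ > 0 and all ξ ∈ ℝ^N, s ∈ ℝ; and the evolution matrices U(s,r) (solving D_s U(s,r) = B(s)U(s,r), U(r,r) = I) satisfy ‖U(r,s)‖ ≤ C₀ e^{-ω(s-r)} for all s ≥ r and some constants C₀, ω > 0. Define Q_s = ∫_s^{+∞} U(s,ξ) Q(ξ) U(s,ξ)* dξ. Then there exist constants C₁, C₂ > 0 such that for all r ∈ ℝ and x ∈ ℝ^N: C₁|x|² ≤ ⟨Q_r x, x⟩ ≤ C₂|x|², C₂^{-1}|x| ≤ |Q_r^{-1} x| ≤ C₁^{-1}|x|, and C₁^N ≤ det Q_r ≤ C₂^N. -/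
noncomputable section
open MeasureTheory Real Set Filter ENNReal NNReal Matrix

/-- The Euclidean norm of a vector in `ℝ^N`. -/
def enorm2 {N : ℕ} (x : Fin N → ℝ) : ℝ := Real.sqrt (∑ i, x i ^ 2)

/-- The operator norm of a matrix with respect to the Euclidean norm. -/
def opNorm {N : ℕ} (A : Matrix (Fin N) (Fin N) ℝ) : ℝ :=
  ‖Matrix.toEuclideanCLM (𝕜 := ℝ) A‖

open Topology

namespace Stmt0

variable {N : ℕ}

lemma enorm2_nonneg (x : Fin N → ℝ) : 0 ≤ enorm2 x := Real.sqrt_nonneg _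

lemma enorm2_eq_norm (x : Fin N → ℝ) :
    enorm2 x = ‖(WithLp.equiv 2 (Fin N → ℝ)).symm x‖ := by
  rw [EuclideanSpace.norm_eq]
  simp [enorm2, sq_abs]

lemma sq_enorm2 (x : Fin N → ℝ) : enorm2 x ^ 2 = ∑ i, x i ^ 2 :=
  Real.sq_sqrt (Finset.sum_nonneg fun i _ => sq_nonneg _)

lemma abs_le_enorm2 (x : Fin N → ℝ) (i : Fin N) : |x i| ≤ enorm2 x := by
  rw [← Real.sqrt_sq_eq_abs]
  exact Real.sqrt_le_sqrt (Finset.single_le_sum (fun j _ => sq_nonneg (x j)) (Finset.mem_univ i))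

lemma enorm2_le (x : Fin N → ℝ) {c : ℝ} (hc : 0 ≤ c) (h : ∀ i, |x i| ≤ c) :
    enorm2 x ≤ Real.sqrt N * c := by
  have : ∑ i, x i ^ 2 ≤ ∑ _i : Fin N, c ^ 2 :=
    Finset.sum_le_sum fun i _ => by
      rw [← sq_abs]; exact pow_le_pow_left₀ (abs_nonneg _) (h i) 2
  calc enorm2 x ≤ Real.sqrt (∑ _i : Fin N, c ^ 2) := Real.sqrt_le_sqrt this
    _ = Real.sqrt (N * c ^ 2) := by simp [Finset.sum_const, mul_comm]
    _ = Real.sqrt N * c := by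
        rw [Real.sqrt_mul (Nat.cast_nonneg N), Real.sqrt_sq hc]

/-- Bound on `enorm2 (M *ᵥ y)` from an entrywise bound. -/
lemma enorm2_mulVec_le (M : Matrix (Fin N) (Fin N) ℝ) {c : ℝ} (hc : 0 ≤ c)
    (h : ∀ i j, |M i j| ≤ c) (y : Fin N → ℝ) :
    enorm2 (M *ᵥ y) ≤ Real.sqrt N * N * c * enorm2 y := by
  have hy := enorm2_nonneg y
  have key : ∀ i, |(M *ᵥ y) i| ≤ N * c * enorm2 y := by
    intro i
    calc |(M *ᵥ y) i| = |∑ j, M i j * y j| := by simp [Matrix.mulVec, dotProduct]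
      _ ≤ ∑ j, |M i j * y j| := Finset.abs_sum_le_sum_abs _ _
      _ ≤ ∑ _j : Fin N, c * enorm2 y := Finset.sum_le_sum fun j _ => by
          rw [abs_mul]
          exact mul_le_mul (h i j) (abs_le_enorm2 y j) (abs_nonneg _) hc
      _ = N * c * enorm2 y := by simp [Finset.sum_const, mul_assoc]
  calc enorm2 (M *ᵥ y) ≤ Real.sqrt N * (N * c * enorm2 y) :=
        enorm2_le _ (by positivity) key
    _ = Real.sqrt N * N * c * enorm2 y := by ring

lemma entry_le_opNorm (A : Matrix (Fin N) (Fin N) ℝ) (i j : Fin N) :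
    |A i j| ≤ opNorm A := by
  have h1 : A *ᵥ Pi.single j 1 = fun i => A i j := by simp; rfl
  have key : (Matrix.toEuclideanCLM (𝕜 := ℝ) A) ((WithLp.equiv 2 (Fin N → ℝ)).symm (Pi.single j 1))
      = (WithLp.equiv 2 (Fin N → ℝ)).symm (A *ᵥ Pi.single j 1) := by
    rfl
  have h2 : enorm2 (A *ᵥ Pi.single j 1) ≤ opNorm A * enorm2 (Pi.single j 1) := by
    rw [enorm2_eq_norm, enorm2_eq_norm, ← key]
    exact (Matrix.toEuclideanCLM (𝕜 := ℝ) A).le_opNorm _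
  have h3 : enorm2 (N := N) (Pi.single j (1:ℝ)) = 1 := by
    have h4 : ∀ k : Fin N, (Pi.single j (1:ℝ) : Fin N → ℝ) k ^ 2 = if k = j then 1 else 0 := by
      intro k; by_cases hk : k = j <;> simp [Pi.single_apply, hk]
    simp [enorm2, h4]
  calc |A i j| = |(A *ᵥ Pi.single j 1) i| := by rw [h1]
    _ ≤ enorm2 (A *ᵥ Pi.single j 1) := abs_le_enorm2 _ i
    _ ≤ opNorm A * enorm2 (Pi.single j 1) := h2
    _ = opNorm A := by rw [h3, mul_one]


lemma dot_eq (M : Matrix (Fin N) (Fin N) ℝ) (x : Fin N → ℝ) :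
    (M *ᵥ x) ⬝ᵥ x = ∑ i, M.mulVec x i * x i := rfl

lemma dot_self_eq (u : Fin N → ℝ) : u ⬝ᵥ u = enorm2 u ^ 2 := by
  rw [sq_enorm2]; simp [dotProduct, pow_two]

lemma qf_symm {M : Matrix (Fin N) (Fin N) ℝ} (hsym : Mᵀ = M) (u w : Fin N → ℝ) :
    (M *ᵥ u) ⬝ᵥ w = (M *ᵥ w) ⬝ᵥ u := by
  rw [dotProduct_comm, Matrix.dotProduct_mulVec, ← Matrix.mulVec_transpose, hsym]

lemma dot_le (u w : Fin N → ℝ) : u ⬝ᵥ w ≤ enorm2 u * enorm2 w := by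
  have h := real_inner_le_norm ((WithLp.equiv 2 (Fin N → ℝ)).symm u)
    ((WithLp.equiv 2 (Fin N → ℝ)).symm w)
  rw [enorm2_eq_norm, enorm2_eq_norm]
  refine le_trans (le_of_eq ?_) h
  simp [dotProduct, PiLp.inner_apply, RCLike.inner_apply, starRingEnd_apply, mul_comm]

lemma psd_cs {M : Matrix (Fin N) (Fin N) ℝ} (hsym : Mᵀ = M)
    (hpsd : ∀ x : Fin N → ℝ, 0 ≤ (M *ᵥ x) ⬝ᵥ x) (u w : Fin N → ℝ) :
    ((M *ᵥ u) ⬝ᵥ w) ^ 2 ≤ ((M *ᵥ u) ⬝ᵥ u) * ((M *ᵥ w) ⬝ᵥ w) := by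
  have key : ∀ t : ℝ, 0 ≤ ((M *ᵥ w) ⬝ᵥ w) * (t * t) + (2 * ((M *ᵥ u) ⬝ᵥ w)) * t
      + ((M *ᵥ u) ⬝ᵥ u) := by
    intro t
    have h0 := hpsd (u + t • w)
    have expand : (M *ᵥ (u + t • w)) ⬝ᵥ (u + t • w)
        = ((M *ᵥ w) ⬝ᵥ w) * (t * t) + (2 * ((M *ᵥ u) ⬝ᵥ w)) * t + ((M *ᵥ u) ⬝ᵥ u) := by
      simp only [Matrix.mulVec_add, Matrix.mulVec_smul, add_dotProduct,
        dotProduct_add, smul_dotProduct,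
        dotProduct_smul, qf_symm hsym w u, smul_eq_mul]
      ring
    rw [expand] at h0; exact h0
  have hd := discrim_le_zero key
  rw [discrim] at hd
  nlinarith [hd]

lemma linalg (M : Matrix (Fin N) (Fin N) ℝ) (hsym : Mᵀ = M)
    {C₁ C₂ : ℝ} (hC₁ : 0 < C₁) (hC₂ : 0 < C₂)
    (hlow : ∀ x : Fin N → ℝ, C₁ * enorm2 x ^ 2 ≤ (M *ᵥ x) ⬝ᵥ x)
    (hup : ∀ x : Fin N → ℝ, (M *ᵥ x) ⬝ᵥ x ≤ C₂ * enorm2 x ^ 2) :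
    (∀ x : Fin N → ℝ, C₂⁻¹ * enorm2 x ≤ enorm2 (M⁻¹ *ᵥ x)
      ∧ enorm2 (M⁻¹ *ᵥ x) ≤ C₁⁻¹ * enorm2 x)
    ∧ (C₁ ^ N ≤ M.det ∧ M.det ≤ C₂ ^ N) := by
  have hherm : M.IsHermitian := by
    show Mᴴ = M
    ext i j
    rw [Matrix.conjTranspose_apply, star_trivial]
    exact congrFun (congrFun hsym i) j
  -- eigenvalue bounds
  have hlam : ∀ i, C₁ ≤ hherm.eigenvalues i ∧ hherm.eigenvalues i ≤ C₂ := by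
    intro i
    have hv1 : ‖hherm.eigenvectorBasis i‖ = 1 := hherm.eigenvectorBasis.orthonormal.1 i
    have hve : enorm2 (⇑(hherm.eigenvectorBasis i)) = 1 := by
      rw [enorm2_eq_norm]; exact hv1
    have hmul : M *ᵥ ⇑(hherm.eigenvectorBasis i)
        = hherm.eigenvalues i • ⇑(hherm.eigenvectorBasis i) := hherm.mulVec_eigenvectorBasis i
    have hq : (M *ᵥ ⇑(hherm.eigenvectorBasis i)) ⬝ᵥ ⇑(hherm.eigenvectorBasis i)
        = hherm.eigenvalues i := by
      rw [hmul, smul_dotProduct, dot_self_eq, hve]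
      simp
    constructor
    · have h := hlow ⇑(hherm.eigenvectorBasis i); rwa [hve, one_pow, mul_one, hq] at h
    · have h := hup ⇑(hherm.eigenvectorBasis i); rwa [hve, one_pow, mul_one, hq] at h
  have hdet : M.det = ∏ i, hherm.eigenvalues i := by
    simpa using hherm.det_eq_prod_eigenvalues
  have detlb : C₁ ^ N ≤ M.det := by
    rw [hdet]
    calc C₁ ^ N = ∏ _i : Fin N, C₁ := by simp
      _ ≤ ∏ i, hherm.eigenvalues i :=
        Finset.prod_le_prod (fun i _ => le_of_lt hC₁) (fun i _ => (hlam i).1)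
  have detub : M.det ≤ C₂ ^ N := by
    rw [hdet]
    calc ∏ i, hherm.eigenvalues i ≤ ∏ _i : Fin N, C₂ :=
        Finset.prod_le_prod (fun i _ => le_trans hC₁.le (hlam i).1) (fun i _ => (hlam i).2)
      _ = C₂ ^ N := by simp
  have hunit : IsUnit M.det :=
    isUnit_iff_ne_zero.2 (ne_of_gt (lt_of_lt_of_le (pow_pos hC₁ N) detlb))
  have key1 : ∀ y : Fin N → ℝ, C₁ * enorm2 y ≤ enorm2 (M *ᵥ y) := by
    intro y
    rcases eq_or_lt_of_le (enorm2_nonneg y) with h0 | h0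
    · rw [← h0, mul_zero]; exact enorm2_nonneg _
    · have h1 : C₁ * enorm2 y * enorm2 y ≤ enorm2 (M *ᵥ y) * enorm2 y := by
        calc C₁ * enorm2 y * enorm2 y = C₁ * enorm2 y ^ 2 := by ring
          _ ≤ (M *ᵥ y) ⬝ᵥ y := hlow y
          _ ≤ enorm2 (M *ᵥ y) * enorm2 y := dot_le _ _
      exact le_of_mul_le_mul_right h1 h0
  have hpsd : ∀ x : Fin N → ℝ, 0 ≤ (M *ᵥ x) ⬝ᵥ x :=
    fun x => le_trans (by positivity) (hlow x)
  have key2 : ∀ y : Fin N → ℝ, enorm2 (M *ᵥ y) ≤ C₂ * enorm2 y := by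
    intro y
    have ha := enorm2_nonneg (M *ᵥ y); have hb := enorm2_nonneg y
    rcases eq_or_lt_of_le ha with h0 | h0
    · rw [← h0]; positivity
    · have hcs := psd_cs hsym hpsd y (M *ᵥ y)
      have e1 : (M *ᵥ y) ⬝ᵥ (M *ᵥ y) = enorm2 (M *ᵥ y) ^ 2 := dot_self_eq _
      have h5 : ((M *ᵥ y) ⬝ᵥ y) * ((M *ᵥ (M *ᵥ y)) ⬝ᵥ (M *ᵥ y))
          ≤ (C₂ * enorm2 y ^ 2) * (C₂ * enorm2 (M *ᵥ y) ^ 2) :=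
        mul_le_mul (hup y) (hup (M *ᵥ y)) (hpsd _) (by positivity)
      have hsy : ((M *ᵥ y) ⬝ᵥ y) = ((M *ᵥ y) ⬝ᵥ y) := rfl
      have hcs' : (((M *ᵥ y)) ⬝ᵥ (M *ᵥ y)) ^ 2
          ≤ ((M *ᵥ y) ⬝ᵥ y) * ((M *ᵥ (M *ᵥ y)) ⬝ᵥ (M *ᵥ y)) := by
        have := psd_cs hsym hpsd y (M *ᵥ y)
        rwa [qf_symm hsym y (M *ᵥ y)] at this
      have h6 : enorm2 (M *ᵥ y) ^ 2 * enorm2 (M *ᵥ y) ^ 2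
          ≤ (C₂ * enorm2 y) ^ 2 * enorm2 (M *ᵥ y) ^ 2 := by nlinarith [hcs', e1, h5]
      have h4 : enorm2 (M *ᵥ y) ^ 2 ≤ (C₂ * enorm2 y) ^ 2 :=
        le_of_mul_le_mul_right h6 (by positivity)
      calc enorm2 (M *ᵥ y) = Real.sqrt (enorm2 (M *ᵥ y) ^ 2) := (Real.sqrt_sq ha).symm
        _ ≤ Real.sqrt ((C₂ * enorm2 y) ^ 2) := Real.sqrt_le_sqrt h4
        _ = C₂ * enorm2 y := Real.sqrt_sq (by positivity)
  have hinv : ∀ x : Fin N → ℝ, M *ᵥ (M⁻¹ *ᵥ x) = x := by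
    intro x
    rw [Matrix.mulVec_mulVec, Matrix.mul_nonsing_inv M hunit, Matrix.one_mulVec]
  refine ⟨fun x => ?_, detlb, detub⟩
  have h1 := key1 (M⁻¹ *ᵥ x)
  have h2 := key2 (M⁻¹ *ᵥ x)
  rw [hinv x] at h1 h2
  constructor
  · calc C₂⁻¹ * enorm2 x ≤ C₂⁻¹ * (C₂ * enorm2 (M⁻¹ *ᵥ x)) :=
        mul_le_mul_of_nonneg_left h2 (by positivity)
      _ = enorm2 (M⁻¹ *ᵥ x) := by field_simp
  · calc enorm2 (M⁻¹ *ᵥ x) = C₁⁻¹ * (C₁ * enorm2 (M⁻¹ *ᵥ x)) := by field_simp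
      _ ≤ C₁⁻¹ * enorm2 x := mul_le_mul_of_nonneg_left h1 (by positivity)


/-- Sup-norm bound for `mulVec` from an entrywise bound. -/
lemma pi_mulVec_norm_le (M : Matrix (Fin N) (Fin N) ℝ) {c : ℝ} (hc : 0 ≤ c)
    (h : ∀ i j, |M i j| ≤ c) (w : Fin N → ℝ) : ‖M *ᵥ w‖ ≤ (N * c) * ‖w‖ := by
  refine (pi_norm_le_iff_of_nonneg (by positivity)).2 fun i => ?_
  calc ‖(M *ᵥ w) i‖ = |∑ j, M i j * w j| := rfl
    _ ≤ ∑ j, |M i j * w j| := Finset.abs_sum_le_sum_abs _ _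
    _ ≤ ∑ _j : Fin N, c * ‖w‖ := Finset.sum_le_sum fun j _ => by
        rw [abs_mul]
        exact mul_le_mul (h i j) (norm_le_pi_norm w j) (abs_nonneg _) hc
    _ = N * c * ‖w‖ := by simp [Finset.sum_const, mul_assoc]

section ODE

variable (B : ℝ → Matrix (Fin N) (Fin N) ℝ) (U : ℝ → ℝ → Matrix (Fin N) (Fin N) ℝ)

/-- The derivative of `t ↦ U t r *ᵥ w`. -/
lemma mulVec_hasDerivAt
    (hUderiv : ∀ (r s : ℝ) (i j : Fin N),
      HasDerivAt (fun t => U t r i j) ((B s * U s r) i j) s)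
    (r t : ℝ) (w : Fin N → ℝ) :
    HasDerivAt (fun u => U u r *ᵥ w) (B t *ᵥ (U t r *ᵥ w)) t := by
  apply hasDerivAt_pi.2
  intro i
  have h1 : HasDerivAt (fun t' => ∑ j, U t' r i j * w j) (∑ j, (B t * U t r) i j * w j) t :=
    HasDerivAt.fun_sum fun j _ => (hUderiv r t i j).mul_const (w j)
  have e2 : (B t *ᵥ (U t r *ᵥ w)) i = ∑ j, (B t * U t r) i j * w j := by
    rw [Matrix.mulVec_mulVec]; rfl
  rw [e2]
  exact h1

/-- Grönwall growth bound for the forward flow. -/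
lemma growth_bound {CB : ℝ} (hCB : 0 ≤ CB)
    (hB : ∀ (s : ℝ) (i j : Fin N), |B s i j| ≤ CB)
    (hU0 : ∀ r, U r r = 1)
    (hUderiv : ∀ (r s : ℝ) (i j : Fin N),
      HasDerivAt (fun t => U t r i j) ((B s * U s r) i j) s)
    (r s : ℝ) (hrs : r ≤ s) (v : Fin N → ℝ) :
    ‖U s r *ᵥ v‖ ≤ ‖v‖ * Real.exp ((N * CB) * (s - r)) := by
  have hf : ∀ t, HasDerivAt (fun u => U u r *ᵥ v) (B t *ᵥ (U t r *ᵥ v)) t :=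
    fun t => mulVec_hasDerivAt B U hUderiv r t v
  have key := norm_le_gronwallBound_of_norm_deriv_right_le (f := fun u => U u r *ᵥ v)
    (f' := fun t => B t *ᵥ (U t r *ᵥ v)) (δ := ‖v‖) (K := N * CB) (ε := 0) (a := r) (b := s)
    (fun t _ => (hf t).continuousAt.continuousWithinAt)
    (fun t _ => (hf t).hasDerivWithinAt)
    (by
      have h0 : (fun u => U u r *ᵥ v) r = v := by simp [hU0]
      simp [hU0])
    (fun t _ => by
      have := pi_mulVec_norm_le (B t) hCB (hB t) (U t r *ᵥ v)
      simpa using this)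
  have := key s ⟨hrs, le_refl s⟩
  rwa [gronwallBound_ε0] at this

/-- Entrywise growth bound. -/
lemma growth_entry {CB : ℝ} (hCB : 0 ≤ CB)
    (hB : ∀ (s : ℝ) (i j : Fin N), |B s i j| ≤ CB)
    (hU0 : ∀ r, U r r = 1)
    (hUderiv : ∀ (r s : ℝ) (i j : Fin N),
      HasDerivAt (fun t => U t r i j) ((B s * U s r) i j) s)
    (r s : ℝ) (hrs : r ≤ s) (i j : Fin N) :
    |U s r i j| ≤ Real.exp ((N * CB) * (s - r)) := by
  have h0 := growth_bound B U hCB hB hU0 hUderiv r s hrs (Pi.single j 1)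
  have h2 : ‖(Pi.single j 1 : Fin N → ℝ)‖ ≤ 1 :=
    (pi_norm_le_iff_of_nonneg zero_le_one).2 fun k => by
      by_cases h : k = j <;> simp [Pi.single_apply, h]
  have h1 : |U s r i j| ≤ ‖U s r *ᵥ Pi.single j 1‖ := by
    have := norm_le_pi_norm (U s r *ᵥ Pi.single j 1) i
    simpa using this
  calc |U s r i j| ≤ ‖U s r *ᵥ Pi.single j 1‖ := h1
    _ ≤ ‖(Pi.single j 1 : Fin N → ℝ)‖ * Real.exp ((N * CB) * (s - r)) := h0
    _ ≤ 1 * Real.exp ((N * CB) * (s - r)) :=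
        mul_le_mul_of_nonneg_right h2 (Real.exp_nonneg _)
    _ = Real.exp ((N * CB) * (s - r)) := one_mul _

/-- Cocycle property: `U r ξ * U ξ r = 1` for `r ≤ ξ`. -/
lemma cocycle {CB : ℝ} (hCB : 0 ≤ CB)
    (hB : ∀ (s : ℝ) (i j : Fin N), |B s i j| ≤ CB)
    (hU0 : ∀ r, U r r = 1)
    (hUderiv : ∀ (r s : ℝ) (i j : Fin N),
      HasDerivAt (fun t => U t r i j) ((B s * U s r) i j) s)
    (r ξ : ℝ) (hrξ : r ≤ ξ) : U r ξ * U ξ r = 1 := by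
  have main : ∀ v : Fin N → ℝ, U r ξ *ᵥ (U ξ r *ᵥ v) = v := by
    intro v
    set w := U ξ r *ᵥ v with hw
    have hfd : ∀ t, HasDerivAt (fun u => U u ξ *ᵥ w) (B t *ᵥ (U t ξ *ᵥ w)) t :=
      fun t => mulVec_hasDerivAt B U hUderiv ξ t w
    have hgd : ∀ t, HasDerivAt (fun u => U u r *ᵥ v) (B t *ᵥ (U t r *ᵥ v)) t :=
      fun t => mulVec_hasDerivAt B U hUderiv r t v
    have hK : (0:ℝ) ≤ N * CB := by positivity
    have lip : ∀ t, LipschitzOnWith ⟨N * CB, hK⟩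
        (fun z : Fin N → ℝ => B t *ᵥ z) Set.univ := by
      intro t
      apply LipschitzWith.lipschitzOnWith
      apply LipschitzWith.of_dist_le_mul
      intro z₁ z₂
      rw [dist_eq_norm, dist_eq_norm, ← Matrix.mulVec_sub]
      exact pi_mulVec_norm_le (B t) hCB (hB t) _
    have heq : (fun u => U u ξ *ᵥ w) ξ = (fun u => U u r *ᵥ v) ξ := by
      simp only [hU0, Matrix.one_mulVec, hw]
    have uniq := ODE_solution_unique_of_mem_Icc_left (v := fun t z => B t *ᵥ z)
      (s := fun _ => Set.univ) (K := ⟨N * CB, hK⟩) (a := r) (b := ξ) (fun t _ => lip t)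
      (fun t _ => (hfd t).continuousAt.continuousWithinAt)
      (fun t _ => (hfd t).hasDerivWithinAt)
      (fun t _ => Set.mem_univ _)
      (fun t _ => (hgd t).continuousAt.continuousWithinAt)
      (fun t _ => (hgd t).hasDerivWithinAt)
      (fun t _ => Set.mem_univ _)
      heq
    have hr := uniq ⟨le_refl r, hrξ⟩
    simp only at hr
    rw [hw] at hr
    rw [hr, hU0, Matrix.one_mulVec]
  ext i j
  have hv := main (Pi.single j 1)
  rw [Matrix.mulVec_mulVec] at hv
  have h2 := congrFun hv i
  rw [Matrix.mulVec_single] at h2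
  simp only [MulOpposite.op_one, one_smul, Matrix.col_apply] at h2
  rw [h2]
  by_cases h : i = j <;> simp [Pi.single_apply, Matrix.one_apply, h]

/-- Continuity of `ξ ↦ U r ξ i j` on `Ici r`. -/
lemma U_cont2 {CB : ℝ} (hCB : 0 ≤ CB)
    (hB : ∀ (s : ℝ) (i j : Fin N), |B s i j| ≤ CB)
    (hU0 : ∀ r, U r r = 1)
    (hUderiv : ∀ (r s : ℝ) (i j : Fin N),
      HasDerivAt (fun t => U t r i j) ((B s * U s r) i j) s)
    (r : ℝ) (i j : Fin N) :
    ContinuousOn (fun ξ => U r ξ i j) (Set.Ici r) := by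
  have hc : Continuous fun ξ => U ξ r :=
    continuous_pi fun i' => continuous_pi fun j' =>
      continuous_iff_continuousAt.2 fun s => (hUderiv r s i' j').continuousAt
  have hdetc : Continuous fun ξ => (U ξ r).det := hc.matrix_det
  have hadjc : Continuous fun ξ => (U ξ r).adjugate i j :=
    ((continuous_apply j).comp ((continuous_apply i).comp hc.matrix_adjugate))
  have hne : ∀ ξ ∈ Set.Ici r, (U ξ r).det ≠ 0 := by
    intro ξ hξ
    have h1 : (U r ξ).det * (U ξ r).det = 1 := by
      rw [← Matrix.det_mul, cocycle B U hCB hB hU0 hUderiv r ξ hξ, Matrix.det_one]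
    exact right_ne_zero_of_mul_eq_one h1
  have heq : Set.EqOn (fun ξ => U r ξ i j)
      (fun ξ => ((U ξ r).det)⁻¹ * (U ξ r).adjugate i j) (Set.Ici r) := by
    intro ξ hξ
    have hinv : U r ξ = (U ξ r)⁻¹ :=
      (Matrix.inv_eq_left_inv (cocycle B U hCB hB hU0 hUderiv r ξ hξ)).symm
    simp only
    rw [hinv, Matrix.inv_def]
    simp [Ring.inverse_eq_inv', Matrix.smul_apply, smul_eq_mul]
  refine ContinuousOn.congr ?_ heq
  exact ((hdetc.continuousOn).inv₀ hne).mul hadjc.continuousOn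

end ODE

/-- Integrability of the shifted exponential. -/
lemma exp_shift_integrable (r c : ℝ) (hc : 0 < c) :
    IntegrableOn (fun ξ => Real.exp (-c * (ξ - r))) (Set.Ioi r) := by
  have h : (fun ξ => Real.exp (-c * (ξ - r))) = fun ξ => Real.exp (c * r) * Real.exp (-c * ξ) := by
    funext ξ; rw [← Real.exp_add]; ring_nf
  rw [h]
  exact (exp_neg_integrableOn_Ioi r hc).const_mul _

/-- Value of the shifted exponential integral. -/
lemma exp_shift_integral (r c : ℝ) (hc : 0 < c) :
    ∫ ξ in Set.Ioi r, Real.exp (-c * (ξ - r)) = c⁻¹ := by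
  have hderiv : ∀ ξ ∈ Set.Ici r,
      HasDerivAt (fun u => -c⁻¹ * Real.exp (-c * (u - r))) (Real.exp (-c * (ξ - r))) ξ := by
    intro ξ _
    have h1 : HasDerivAt (fun u : ℝ => -c * (u - r)) (-c) ξ := by
      simpa using ((hasDerivAt_id ξ).sub_const r).const_mul (-c)
    have h2 := (h1.exp).const_mul (-c⁻¹)
    refine h2.congr_deriv ?_
    rw [show -c⁻¹ * (Real.exp (-c * (ξ - r)) * -c) = Real.exp (-c * (ξ - r)) * (c⁻¹ * c) by ring,
      inv_mul_cancel₀ hc.ne', mul_one]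
  have htend : Tendsto (fun u => -c⁻¹ * Real.exp (-c * (u - r))) atTop (𝓝 0) := by
    have h3 : Tendsto (fun u : ℝ => c * (u - r)) atTop atTop :=
      (tendsto_atTop_add_const_right _ (-r) tendsto_id).const_mul_atTop hc
    have h4 : Tendsto (fun u : ℝ => Real.exp (-c * (u - r))) atTop (𝓝 0) := by
      have := Real.tendsto_exp_neg_atTop_nhds_zero.comp h3
      refine this.congr fun u => ?_
      simp only [Function.comp_apply]; ring_nf
    have := h4.const_mul (-c⁻¹)
    simpa using this
  have := integral_Ioi_of_hasDerivAt_of_tendsto' hderiv (exp_shift_integrable r c hc) htend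
  rw [this]
  simp


lemma conj_qf (A Qm : Matrix (Fin N) (Fin N) ℝ) (x : Fin N → ℝ) :
    ((A * Qm * Aᵀ) *ᵥ x) ⬝ᵥ x = (Qm *ᵥ (Aᵀ *ᵥ x)) ⬝ᵥ (Aᵀ *ᵥ x) := by
  rw [← Matrix.mulVec_mulVec, ← Matrix.mulVec_mulVec]
  rw [dotProduct_comm, Matrix.dotProduct_mulVec, ← Matrix.mulVec_transpose]
  rw [dotProduct_comm]

lemma entry3 (A Qm : Matrix (Fin N) (Fin N) ℝ) {a c : ℝ} (ha : 0 ≤ a) (hc : 0 ≤ c)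
    (hA : ∀ i j, |A i j| ≤ a) (hQ : ∀ i j, |Qm i j| ≤ c) (i j : Fin N) :
    |(A * Qm * Aᵀ) i j| ≤ (N:ℝ)^2 * (c * a^2) := by
  have h1 : (A * Qm * Aᵀ) i j = ∑ k, ∑ l, A i l * Qm l k * A j k := by
    rw [Matrix.mul_apply]
    refine Finset.sum_congr rfl fun k _ => ?_
    rw [Matrix.mul_apply, Matrix.transpose_apply, Finset.sum_mul]
  rw [h1]
  have hb : ∀ k l : Fin N, |A i l * Qm l k * A j k| ≤ a * c * a := by
    intro k l
    rw [abs_mul, abs_mul]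
    exact mul_le_mul (mul_le_mul (hA i l) (hQ l k) (abs_nonneg _) ha) (hA j k)
      (abs_nonneg _) (by positivity)
  calc |∑ k, ∑ l, A i l * Qm l k * A j k| ≤ ∑ k, |∑ l, A i l * Qm l k * A j k| :=
        Finset.abs_sum_le_sum_abs _ _
    _ ≤ ∑ k : Fin N, ∑ l : Fin N, |A i l * Qm l k * A j k| :=
        Finset.sum_le_sum fun k _ => Finset.abs_sum_le_sum_abs _ _
    _ ≤ ∑ _k : Fin N, ∑ _l : Fin N, a * c * a :=
        Finset.sum_le_sum fun k _ => Finset.sum_le_sum fun l _ => hb k l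
    _ = (N:ℝ)^2 * (c * a^2) := by simp [Finset.sum_const]; ring

lemma exp_sq (a t : ℝ) : Real.exp (-(2*a) * t) = Real.exp (-a * t) ^ 2 := by
  rw [sq, ← Real.exp_add]; ring_nf

end Stmt0

open Stmt0 in
/-- Lemma on the covariance matrices `Q_r` of the invariant measures:
under the Ornstein-Uhlenbeck hypotheses there are constants `C₁, C₂ > 0` with
`C₁|x|² ≤ ⟨Q_r x, x⟩ ≤ C₂|x|²`, `C₂⁻¹|x| ≤ |Q_r⁻¹ x| ≤ C₁⁻¹|x|` and
`C₁^N ≤ det Q_r ≤ C₂^N` for all `r ∈ ℝ`, `x ∈ ℝ^N`. -/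
theorem statement0 (N : ℕ) (hN : 1 ≤ N)
    (Q B : ℝ → Matrix (Fin N) (Fin N) ℝ)
    -- q_{ij} ∈ C_b^1(ℝ)
    (hQreg : ∀ i j, ContDiff ℝ 1 fun s => Q s i j)
    (hQbd : ∃ C : ℝ, ∀ (s : ℝ) (i j : Fin N),
      |Q s i j| ≤ C ∧ |deriv (fun t => Q t i j) s| ≤ C)
    -- b_{ij} ∈ C_b(ℝ)
    (hBcont : ∀ i j, Continuous fun s => B s i j)
    (hBbd : ∃ C : ℝ, ∀ (s : ℝ) (i j : Fin N), |B s i j| ≤ C)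
    -- Q(s) symmetric and uniformly elliptic
    (hQsym : ∀ s, (Q s)ᵀ = Q s)
    (η₀ : ℝ) (hη₀ : 0 < η₀)
    (hQell : ∀ (s : ℝ) (ξ : Fin N → ℝ),
      η₀ * enorm2 ξ ^ 2 ≤ ∑ i, (Q s).mulVec ξ i * ξ i)
    -- U(·,r) is the solution of D_s U(s,r) = B(s) U(s,r), U(r,r) = I
    (U : ℝ → ℝ → Matrix (Fin N) (Fin N) ℝ)
    (hU0 : ∀ r, U r r = 1)
    (hUderiv : ∀ (r s : ℝ) (i j : Fin N),
      HasDerivAt (fun t => U t r i j) ((B s * U s r) i j) s)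
    -- exponential decay: ‖U(r,s)‖ ≤ C₀ e^{-ω(s-r)} for s ≥ r
    (C₀ ω : ℝ) (hC₀ : 0 < C₀) (hω : 0 < ω)
    (hdecay : ∀ r s : ℝ, r ≤ s → opNorm (U r s) ≤ C₀ * Real.exp (-ω * (s - r)))
    -- Q_s = ∫_s^∞ U(s,ξ) Q(ξ) U(s,ξ)* dξ
    (Qs : ℝ → Matrix (Fin N) (Fin N) ℝ)
    (hQs : ∀ (s : ℝ) (i j : Fin N),
      Qs s i j = ∫ ξ in Set.Ioi s, (U s ξ * Q ξ * (U s ξ)ᵀ) i j) :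
    ∃ C₁ C₂ : ℝ, 0 < C₁ ∧ 0 < C₂ ∧
      ∀ (r : ℝ) (x : Fin N → ℝ),
        (C₁ * enorm2 x ^ 2 ≤ ∑ i, (Qs r).mulVec x i * x i ∧
          ∑ i, (Qs r).mulVec x i * x i ≤ C₂ * enorm2 x ^ 2) ∧
        (C₂⁻¹ * enorm2 x ≤ enorm2 ((Qs r)⁻¹.mulVec x) ∧
          enorm2 ((Qs r)⁻¹.mulVec x) ≤ C₁⁻¹ * enorm2 x) ∧
        (C₁ ^ N ≤ (Qs r).det ∧ (Qs r).det ≤ C₂ ^ N) := by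
  classical
  obtain ⟨CB0, hB0⟩ := hBbd
  obtain ⟨CQ0, hQ0⟩ := hQbd
  set CB : ℝ := max CB0 0 with hCBdef
  have hCB : 0 ≤ CB := le_max_right _ _
  have hB : ∀ (s : ℝ) (i j : Fin N), |B s i j| ≤ CB :=
    fun s i j => le_trans (hB0 s i j) (le_max_left _ _)
  set CQ : ℝ := max CQ0 0 + 1 with hCQdef
  have hCQ : 0 < CQ := by positivity
  have hQb : ∀ (s : ℝ) (i j : Fin N), |Q s i j| ≤ CQ := fun s i j => by
    refine le_trans (hQ0 s i j).1 ?_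
    rw [hCQdef]
    have := le_max_left CQ0 (0:ℝ)
    linarith
  have hNpos : (0:ℝ) < N := by exact_mod_cast hN
  set α : ℝ := Real.sqrt N * N with hαdef
  have hα : 0 < α := by
    rw [hαdef]
    have h1 : 0 < Real.sqrt N := Real.sqrt_pos.2 hNpos
    positivity
  set K : ℝ := (N:ℝ) * CB with hKdef
  have hK : 0 ≤ K := by rw [hKdef]; positivity
  set L : ℝ := K + 1 with hLdef
  have hL : 0 < L := by rw [hLdef]; linarith
  set C₁ : ℝ := η₀ * (α⁻¹)^2 * (2*L)⁻¹ with hC₁def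
  set C₂ : ℝ := (α * CQ * (α * C₀)^2) * (2*ω)⁻¹ with hC₂def
  have hC₁pos : 0 < C₁ := by rw [hC₁def]; positivity
  have hC₂pos : 0 < C₂ := by rw [hC₂def]; positivity
  have hmv : ∀ (M : Matrix (Fin N) (Fin N) ℝ) (c : ℝ), 0 ≤ c → (∀ i j, |M i j| ≤ c) →
      ∀ y, enorm2 (M *ᵥ y) ≤ α * c * enorm2 y := by
    intro M c hc h y
    rw [hαdef]
    exact enorm2_mulVec_le M hc h y
  -- the core quadratic form bounds
  have main : ∀ (r : ℝ) (x : Fin N → ℝ),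
      C₁ * enorm2 x ^ 2 ≤ ((Qs r) *ᵥ x) ⬝ᵥ x ∧ ((Qs r) *ᵥ x) ⬝ᵥ x ≤ C₂ * enorm2 x ^ 2 := by
    intro r x
    set g : Fin N → Fin N → ℝ → ℝ := fun i j ξ => (U r ξ * Q ξ * (U r ξ)ᵀ) i j with hgdef
    set S : ℝ → ℝ := fun ξ => ((U r ξ * Q ξ * (U r ξ)ᵀ) *ᵥ x) ⬝ᵥ x with hSdef
    have hUe : ∀ ξ, r ≤ ξ → ∀ i j, |U r ξ i j| ≤ C₀ * Real.exp (-ω * (ξ - r)) :=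
      fun ξ hξ i j => le_trans (entry_le_opNorm _ i j) (hdecay r ξ hξ)
    have hC0exp : ∀ ξ : ℝ, (0:ℝ) ≤ C₀ * Real.exp (-ω * (ξ - r)) := fun ξ => by positivity
    -- continuity of entries
    have hUc : ∀ i j, ContinuousOn (fun ξ => U r ξ i j) (Set.Ici r) :=
      fun i j => U_cont2 B U hCB hB hU0 hUderiv r i j
    have hgcont : ∀ i j, ContinuousOn (g i j) (Set.Ici r) := by
      intro i j
      have hUQ : ∀ i j, ContinuousOn (fun ξ => (U r ξ * Q ξ) i j) (Set.Ici r) := by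
        intro i j
        have he : (fun ξ => (U r ξ * Q ξ) i j) = fun ξ => ∑ l, U r ξ i l * Q ξ l j := by
          funext ξ; rw [Matrix.mul_apply]
        rw [he]
        exact continuousOn_finset_sum _ fun l _ =>
          (hUc i l).mul ((hQreg l j).continuous.continuousOn)
      have he : g i j = fun ξ => ∑ k, (U r ξ * Q ξ) i k * U r ξ j k := by
        funext ξ
        rw [hgdef]
        simp only
        rw [Matrix.mul_apply]
        exact Finset.sum_congr rfl fun k _ => by rw [Matrix.transpose_apply]
      rw [he]
      exact continuousOn_finset_sum _ fun k _ => (hUQ i k).mul (hUc j k)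
    -- entrywise bound on the integrand
    have hgbd : ∀ (i j : Fin N), ∀ ξ ∈ Set.Ioi r,
        |g i j ξ| ≤ ((N:ℝ)^2 * (CQ * C₀^2)) * Real.exp (-(2*ω) * (ξ - r)) := by
      intro i j ξ hξ
      have h3 := entry3 (U r ξ) (Q ξ) (hC0exp ξ) hCQ.le
        (fun i j => hUe ξ (le_of_lt hξ) i j) (fun i j => hQb ξ i j) i j
      refine le_trans h3 (le_of_eq ?_)
      rw [exp_sq ω (ξ - r)]
      ring
    have hexpint : ∀ c : ℝ, 0 < c → IntegrableOn (fun ξ => Real.exp (-c * (ξ - r))) (Set.Ioi r) :=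
      fun c hc => exp_shift_integrable r c hc
    have hgint : ∀ i j, IntegrableOn (g i j) (Set.Ioi r) := by
      intro i j
      refine Integrable.mono' ((hexpint (2*ω) (by positivity)).const_mul ((N:ℝ)^2 * (CQ * C₀^2)))
        (((hgcont i j).mono Set.Ioi_subset_Ici_self).aestronglyMeasurable measurableSet_Ioi) ?_
      refine (ae_restrict_iff' measurableSet_Ioi).2 (ae_of_all _ fun ξ hξ => ?_)
      simpa [Real.norm_eq_abs] using hgbd i j ξ hξ
    have hSeq : ∀ ξ, S ξ = ∑ i, ∑ j, g i j ξ * (x j * x i) := by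
      intro ξ
      rw [hSdef]
      simp only [dotProduct, Matrix.mulVec, hgdef]
      refine Finset.sum_congr rfl fun i _ => ?_
      rw [Finset.sum_mul]
      exact Finset.sum_congr rfl fun j _ => by ring
    have hSint : IntegrableOn S (Set.Ioi r) := by
      have he : S = fun ξ => ∑ i, ∑ j, g i j ξ * (x j * x i) := funext hSeq
      rw [he]
      exact integrable_finset_sum _ fun i _ =>
        integrable_finset_sum _ fun j _ => (hgint i j).mul_const _
    have hQsum : ((Qs r) *ᵥ x) ⬝ᵥ x = ∫ ξ in Set.Ioi r, S ξ := by
      have h1 : ((Qs r) *ᵥ x) ⬝ᵥ x = ∑ i, ∑ j, (Qs r i j) * (x j * x i) := by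
        simp only [dotProduct, Matrix.mulVec]
        refine Finset.sum_congr rfl fun i _ => ?_
        rw [Finset.sum_mul]
        exact Finset.sum_congr rfl fun j _ => by ring
      rw [h1]
      calc ∑ i, ∑ j, (Qs r i j) * (x j * x i)
          = ∑ i, ∑ j, ∫ ξ in Set.Ioi r, g i j ξ * (x j * x i) := by
            refine Finset.sum_congr rfl fun i _ => Finset.sum_congr rfl fun j _ => ?_
            rw [hQs r i j, ← MeasureTheory.integral_mul_const]
        _ = ∑ i, ∫ ξ in Set.Ioi r, ∑ j, g i j ξ * (x j * x i) :=
            Finset.sum_congr rfl fun i _ =>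
              (integral_finset_sum _ fun j _ => (hgint i j).mul_const _).symm
        _ = ∫ ξ in Set.Ioi r, ∑ i, ∑ j, g i j ξ * (x j * x i) :=
            (integral_finset_sum _ fun i _ =>
              integrable_finset_sum _ fun j _ => (hgint i j).mul_const _).symm
        _ = ∫ ξ in Set.Ioi r, S ξ :=
            integral_congr_ae (ae_of_all _ fun ξ => (hSeq ξ).symm)
    -- pointwise bounds
    have hcoc : ∀ ξ, r ≤ ξ → (U ξ r)ᵀ *ᵥ ((U r ξ)ᵀ *ᵥ x) = x := by
      intro ξ hξ
      rw [Matrix.mulVec_mulVec, ← Matrix.transpose_mul,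
        cocycle B U hCB hB hU0 hUderiv r ξ hξ, Matrix.transpose_one, Matrix.one_mulVec]
    have hUge : ∀ ξ, r ≤ ξ → ∀ i j, |(U ξ r)ᵀ i j| ≤ Real.exp (L * (ξ - r)) := by
      intro ξ hξ i j
      rw [Matrix.transpose_apply]
      refine le_trans (growth_entry B U hCB hB hU0 hUderiv r ξ hξ j i) ?_
      apply Real.exp_le_exp.2
      have h5 : (0:ℝ) ≤ ξ - r := by linarith
      rw [hLdef, hKdef]
      nlinarith [h5, hK]
    have hSlow : ∀ ξ ∈ Set.Ioi r,
        (η₀ * (α⁻¹)^2 * enorm2 x ^ 2) * Real.exp (-(2*L) * (ξ - r)) ≤ S ξ := by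
      intro ξ hξ
      have hξ' : r ≤ ξ := le_of_lt hξ
      have hSy : S ξ = (Q ξ *ᵥ ((U r ξ)ᵀ *ᵥ x)) ⬝ᵥ ((U r ξ)ᵀ *ᵥ x) := conj_qf _ _ _
      set y : Fin N → ℝ := (U r ξ)ᵀ *ᵥ x with hy
      have hxle : enorm2 x ≤ α * Real.exp (L * (ξ - r)) * enorm2 y := by
        have h6 := hmv ((U ξ r)ᵀ) (Real.exp (L * (ξ - r))) (Real.exp_nonneg _) (hUge ξ hξ') y
        rw [hy, hcoc ξ hξ'] at h6
        exact h6
      have hyge : α⁻¹ * Real.exp (-L * (ξ - r)) * enorm2 x ≤ enorm2 y := by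
        have h5 : α⁻¹ * Real.exp (-L * (ξ - r)) * enorm2 x
            ≤ α⁻¹ * Real.exp (-L * (ξ - r)) * (α * Real.exp (L * (ξ - r)) * enorm2 y) :=
          mul_le_mul_of_nonneg_left hxle (by positivity)
        refine le_trans h5 (le_of_eq ?_)
        have h7 : Real.exp (-L * (ξ - r)) * Real.exp (L * (ξ - r)) = 1 := by
          rw [← Real.exp_add]
          norm_num
        rw [show α⁻¹ * Real.exp (-L * (ξ - r)) * (α * Real.exp (L * (ξ - r)) * enorm2 y)
            = (Real.exp (-L * (ξ - r)) * Real.exp (L * (ξ - r))) * (α⁻¹ * α) * enorm2 y from by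
            ring, h7, inv_mul_cancel₀ (ne_of_gt hα)]
        ring
      have hsq : (α⁻¹ * Real.exp (-L * (ξ - r)) * enorm2 x)^2 ≤ enorm2 y ^ 2 :=
        pow_le_pow_left₀ (mul_nonneg (mul_nonneg (inv_nonneg.2 hα.le) (Real.exp_nonneg _))
          (enorm2_nonneg x)) hyge 2
      calc (η₀ * (α⁻¹)^2 * enorm2 x ^ 2) * Real.exp (-(2*L) * (ξ - r))
          = η₀ * (α⁻¹ * Real.exp (-L * (ξ - r)) * enorm2 x)^2 := by
            rw [exp_sq L (ξ - r)]; ring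
        _ ≤ η₀ * enorm2 y ^ 2 := mul_le_mul_of_nonneg_left hsq (le_of_lt hη₀)
        _ ≤ (Q ξ *ᵥ y) ⬝ᵥ y := by rw [dot_eq]; exact hQell ξ y
        _ = S ξ := hSy.symm
    have hSup : ∀ ξ ∈ Set.Ioi r,
        S ξ ≤ (α * CQ * (α * C₀)^2 * enorm2 x ^ 2) * Real.exp (-(2*ω) * (ξ - r)) := by
      intro ξ hξ
      have hξ' : r ≤ ξ := le_of_lt hξ
      have hSy : S ξ = (Q ξ *ᵥ ((U r ξ)ᵀ *ᵥ x)) ⬝ᵥ ((U r ξ)ᵀ *ᵥ x) := conj_qf _ _ _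
      set y : Fin N → ℝ := (U r ξ)ᵀ *ᵥ x with hy
      have hyue : enorm2 y ≤ α * (C₀ * Real.exp (-ω * (ξ - r))) * enorm2 x := by
        refine hmv ((U r ξ)ᵀ) _ (hC0exp ξ) (fun i j => ?_) x
        rw [Matrix.transpose_apply]
        exact hUe ξ hξ' j i
      have h2 : (Q ξ *ᵥ y) ⬝ᵥ y ≤ enorm2 (Q ξ *ᵥ y) * enorm2 y := dot_le _ _
      have h3 : enorm2 (Q ξ *ᵥ y) ≤ α * CQ * enorm2 y := hmv (Q ξ) CQ hCQ.le (hQb ξ) y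
      have h4 : enorm2 y ^ 2 ≤ (α * (C₀ * Real.exp (-ω * (ξ - r))))^2 * enorm2 x ^ 2 := by
        have h8 := pow_le_pow_left₀ (enorm2_nonneg y) hyue 2
        rw [mul_pow] at h8
        exact h8
      calc S ξ = (Q ξ *ᵥ y) ⬝ᵥ y := hSy
        _ ≤ enorm2 (Q ξ *ᵥ y) * enorm2 y := h2
        _ ≤ (α * CQ * enorm2 y) * enorm2 y :=
            mul_le_mul_of_nonneg_right h3 (enorm2_nonneg y)
        _ = α * CQ * enorm2 y ^ 2 := by ring
        _ ≤ α * CQ * ((α * (C₀ * Real.exp (-ω * (ξ - r))))^2 * enorm2 x ^ 2) :=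
            mul_le_mul_of_nonneg_left h4 (by positivity)
        _ = (α * CQ * (α * C₀)^2 * enorm2 x ^ 2) * Real.exp (-(2*ω) * (ξ - r)) := by
            rw [exp_sq ω (ξ - r)]; ring
    constructor
    · rw [hQsum]
      have h6 : ∫ ξ in Set.Ioi r, (η₀ * (α⁻¹)^2 * enorm2 x ^ 2) * Real.exp (-(2*L) * (ξ - r))
          = (η₀ * (α⁻¹)^2 * enorm2 x ^ 2) * (2*L)⁻¹ := by
        rw [MeasureTheory.integral_const_mul, exp_shift_integral r (2*L) (by positivity)]
      have h7 := setIntegral_mono_on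
        (((hexpint (2*L) (by positivity)).const_mul (η₀ * (α⁻¹)^2 * enorm2 x ^ 2)))
        hSint measurableSet_Ioi hSlow
      rw [h6] at h7
      refine le_trans (le_of_eq ?_) h7
      rw [hC₁def]; ring
    · rw [hQsum]
      have h6 : ∫ ξ in Set.Ioi r, (α * CQ * (α * C₀)^2 * enorm2 x ^ 2) * Real.exp (-(2*ω) * (ξ - r))
          = (α * CQ * (α * C₀)^2 * enorm2 x ^ 2) * (2*ω)⁻¹ := by
        rw [MeasureTheory.integral_const_mul, exp_shift_integral r (2*ω) (by positivity)]
      have h7 := setIntegral_mono_on hSint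
        (((hexpint (2*ω) (by positivity)).const_mul (α * CQ * (α * C₀)^2 * enorm2 x ^ 2)))
        measurableSet_Ioi hSup
      rw [h6] at h7
      refine le_trans h7 (le_of_eq ?_)
      rw [hC₂def]; ring
  -- symmetry of Qs r
  have hsymQs : ∀ r, (Qs r)ᵀ = Qs r := by
    intro r
    ext i j
    rw [Matrix.transpose_apply, hQs, hQs]
    refine integral_congr_ae (ae_of_all _ fun ξ => ?_)
    have hmat : (U r ξ * Q ξ * (U r ξ)ᵀ)ᵀ = U r ξ * Q ξ * (U r ξ)ᵀ := by
      rw [Matrix.transpose_mul, Matrix.transpose_mul, Matrix.transpose_transpose, hQsym,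
        ← Matrix.mul_assoc]
    show (U r ξ * Q ξ * (U r ξ)ᵀ) j i = (U r ξ * Q ξ * (U r ξ)ᵀ) i j
    calc (U r ξ * Q ξ * (U r ξ)ᵀ) j i = (U r ξ * Q ξ * (U r ξ)ᵀ)ᵀ i j := rfl
      _ = (U r ξ * Q ξ * (U r ξ)ᵀ) i j := by rw [hmat]
  refine ⟨C₁, C₂, hC₁pos, hC₂pos, fun r x => ?_⟩
  obtain ⟨hinv, hdet⟩ := linalg (Qs r) (hsymQs r) hC₁pos hC₂pos
    (fun z => (main r z).1) (fun z => (main r z).2)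
  refine ⟨⟨?_, ?_⟩, hinv x, hdet⟩
  · rw [← dot_eq]; exact (main r x).1
  · rw [← dot_eq]; exact (main r x).2
end
end

section
/- Assume the Ornstein-Uhlenbeck hypotheses: Q, B : ℝ → ℝ^{N×N} with entries q_{ij} ∈ C_b^1(ℝ), b_{ij} ∈ C_b(ℝ), Q(s) symmetric with ⟨Q(s)ξ, ξ⟩ ≥ η₀|ξ|² for some η₀ > 0, and the evolution matrices U(s,r) (solving D_s U(s,r) = B(s)U(s,r), U(r,r) = I) satisfy ‖U(r,s)‖ ≤ C₀ e^{-ω(s-r)} for all s ≥ r and some C₀, ω > 0. Let Q_s = ∫_s^{+∞} U(s,ξ) Q(ξ) U(s,ξ)* dξ. Then the map s ↦ Q_s is differentiable and satisfies the Lyapunov equation D_s Q_s = −Q(s) + B(s) Q_s + Q_s B(s)*; consequently, the function Φ(s,x) = ½⟨Q_s^{-1}x, x⟩ satisfies D_s Φ(s,x) = ½⟨Q(s) Q_s^{-1} x, Q_s^{-1} x⟩ − ⟨Q_s^{-1} B(s) x, x⟩ for all (s,x) ∈ ℝ^{1+N}. -/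
noncomputable section
open MeasureTheory Real Set Filter ENNReal NNReal Matrix

section Helpers
open Topology

lemma abs_entry_le_opNorm {N : ℕ} (A : Matrix (Fin N) (Fin N) ℝ) (i j : Fin N) :
    |A i j| ≤ opNorm A := by
  set v : EuclideanSpace ℝ (Fin N) := EuclideanSpace.single j 1 with hv
  have hAv : Matrix.toEuclideanCLM (𝕜 := ℝ) A v = (WithLp.equiv _ _).symm (A.mulVec (fun k => if k = j then 1 else 0)) := by
    have : v = (WithLp.equiv _ _).symm (fun k => if k = j then (1:ℝ) else 0) := by
      rw [hv]; ext k; simp [EuclideanSpace.single_apply]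
    rw [this]
    rfl
  have h1 : (Matrix.toEuclideanCLM (𝕜 := ℝ) A v) i = A i j := by
    rw [hAv]
    simp [Matrix.mulVec, dotProduct]
  have h2 : |(Matrix.toEuclideanCLM (𝕜 := ℝ) A v) i| ≤ ‖Matrix.toEuclideanCLM (𝕜 := ℝ) A v‖ := by
    rw [EuclideanSpace.norm_eq]
    rw [← Real.sqrt_sq (abs_nonneg _)]
    apply Real.sqrt_le_sqrt
    rw [sq_abs]
    have := Finset.single_le_sum (f := fun k => ‖(Matrix.toEuclideanCLM (𝕜 := ℝ) A v) k‖^2) (fun k _ => by positivity) (Finset.mem_univ i)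
    simpa [Real.norm_eq_abs, sq_abs] using this
  calc |A i j| = |(Matrix.toEuclideanCLM (𝕜 := ℝ) A v) i| := by rw [h1]
    _ ≤ ‖Matrix.toEuclideanCLM (𝕜 := ℝ) A v‖ := h2
    _ ≤ opNorm A * ‖v‖ := (Matrix.toEuclideanCLM (𝕜 := ℝ) A).le_opNorm v
    _ = opNorm A := by rw [hv, EuclideanSpace.norm_single]; simp


lemma myode_unique_ge {E : Type*} [NormedAddCommGroup E] [NormedSpace ℝ E]
    {v : ℝ → E → E} {K : NNReal} (hv : ∀ t, LipschitzWith K (v t))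
    {f g : ℝ → E} (hf : ∀ t, HasDerivAt f (v t (f t)) t)
    (hg : ∀ t, HasDerivAt g (v t (g t)) t) {r : ℝ} (heq : f r = g r)
    {b : ℝ} (hb : r ≤ b) : f b = g b := by
  have := ODE_solution_unique (v := v) (f := f) (g := g) (a := r) (b := b) hv
    (fun t _ => (hf t).continuousAt.continuousWithinAt)
    (fun t _ => (hf t).hasDerivWithinAt)
    (fun t _ => (hg t).continuousAt.continuousWithinAt)
    (fun t _ => (hg t).hasDerivWithinAt) heq
  exact this ⟨hb, le_rfl⟩

lemma myode_unique {E : Type*} [NormedAddCommGroup E] [NormedSpace ℝ E]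
    {v : ℝ → E → E} {K : NNReal} (hv : ∀ t, LipschitzWith K (v t))
    {f g : ℝ → E} (hf : ∀ t, HasDerivAt f (v t (f t)) t)
    (hg : ∀ t, HasDerivAt g (v t (g t)) t) {r : ℝ} (heq : f r = g r)
    (t : ℝ) : f t = g t := by
  rcases le_total r t with h | h
  · exact myode_unique_ge hv hf hg heq h
  · -- reflect
    set v2 : ℝ → E → E := fun s x => -(v (-s) x) with hv2def
    have hv2 : ∀ s, LipschitzWith K (v2 s) := by
      intro s
      intro x y
      simpa [hv2def, edist_neg_neg] using hv (-s) x y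
    have hf2 : ∀ s, HasDerivAt (fun u => f (-u)) (v2 s ((fun u => f (-u)) s)) s := by
      intro s
      have := (hf (-s)).scomp s (hasDerivAt_neg s)
      simpa [hv2def, Function.comp_def] using this
    have hg2 : ∀ s, HasDerivAt (fun u => g (-u)) (v2 s ((fun u => g (-u)) s)) s := by
      intro s
      have := (hg (-s)).scomp s (hasDerivAt_neg s)
      simpa [hv2def, Function.comp_def] using this
    have h2 : (fun u => f (-u)) (-r) = (fun u => g (-u)) (-r) := by simpa using heq
    have := myode_unique_ge hv2 hf2 hg2 h2 (b := -t) (by linarith)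
    simpa using this

lemma matode_unique {N : ℕ} (B : ℝ → Matrix (Fin N) (Fin N) ℝ) (C : ℝ)
    (hB : ∀ (s : ℝ) (i j : Fin N), |B s i j| ≤ C)
    (f g : ℝ → Matrix (Fin N) (Fin N) ℝ)
    (hf : ∀ (s : ℝ) (i j : Fin N), HasDerivAt (fun t => f t i j) ((B s * f s) i j) s)
    (hg : ∀ (s : ℝ) (i j : Fin N), HasDerivAt (fun t => g t i j) ((B s * g s) i j) s)
    (r : ℝ) (heq : f r = g r) : ∀ t, f t = g t := by
  rcases Nat.eq_zero_or_pos N with hN | hN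
  · intro t; subst hN; ext i j; exact absurd i.2 (by omega)
  have hC : 0 ≤ C := le_trans (abs_nonneg _) (hB 0 ⟨0, hN⟩ ⟨0, hN⟩)
  set v : ℝ → (Fin N → Fin N → ℝ) → (Fin N → Fin N → ℝ) :=
    fun t M i j => ∑ k, B t i k * M k j with hvdef
  set K : NNReal := ⟨N * C, by positivity⟩ with hK
  have hlip : ∀ t, LipschitzWith K (v t) := by
    intro t
    apply LipschitzWith.of_dist_le_mul
    intro M M'
    rw [dist_eq_norm, dist_eq_norm]
    have hnn : (0:ℝ) ≤ ↑K * ‖M - M'‖ := by positivity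
    apply pi_norm_le_iff_of_nonneg hnn |>.2
    intro i
    apply pi_norm_le_iff_of_nonneg hnn |>.2
    intro j
    have hsub : (v t M - v t M') i j = ∑ k, B t i k * (M k j - M' k j) := by
      simp only [Pi.sub_apply, hvdef, mul_sub, Finset.sum_sub_distrib]
    rw [Real.norm_eq_abs]
    show |(v t M - v t M') i j| ≤ _
    rw [hsub]
    calc |∑ k, B t i k * (M k j - M' k j)| ≤ ∑ k, |B t i k * (M k j - M' k j)| :=
          Finset.abs_sum_le_sum_abs _ _
      _ ≤ ∑ _k : Fin N, C * ‖M - M'‖ := by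
          apply Finset.sum_le_sum
          intro k _
          rw [abs_mul]
          have h1 : |M k j - M' k j| ≤ ‖M - M'‖ := by
            have e1 : |M k j - M' k j| = ‖((M - M') k) j‖ := by
              rw [Real.norm_eq_abs]; simp
            rw [e1]
            exact (norm_le_pi_norm _ j).trans (norm_le_pi_norm _ k)
          exact mul_le_mul (hB t i k) h1 (abs_nonneg _) hC
      _ = ↑K * ‖M - M'‖ := by show _ = ((N:ℝ) * C) * ‖M - M'‖; simp; ring
  set F : ℝ → (Fin N → Fin N → ℝ) := fun t i j => f t i j with hF
  set G : ℝ → (Fin N → Fin N → ℝ) := fun t i j => g t i j with hG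
  have hfE : ∀ t, HasDerivAt F (v t (F t)) t := by
    intro t
    rw [hasDerivAt_pi]; intro i; rw [hasDerivAt_pi]; intro j
    simpa [hvdef, hF, Matrix.mul_apply] using hf t i j
  have hgE : ∀ t, HasDerivAt G (v t (G t)) t := by
    intro t
    rw [hasDerivAt_pi]; intro i; rw [hasDerivAt_pi]; intro j
    simpa [hvdef, hG, Matrix.mul_apply] using hg t i j
  have heq' : F r = G r := by ext i j; simp [hF, hG, heq]
  intro t
  have := myode_unique hlip hfE hgE heq' t
  ext i j
  exact congrFun (congrFun this i) j


lemma diffAt_det {N : ℕ} {A : ℝ → Matrix (Fin N) (Fin N) ℝ} {s : ℝ}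
    (hA : ∀ i j, DifferentiableAt ℝ (fun t => A t i j) s) :
    DifferentiableAt ℝ (fun t => (A t).det) s := by
  simp only [Matrix.det_apply']
  apply DifferentiableAt.fun_sum
  intro σ _
  apply DifferentiableAt.const_mul
  exact DifferentiableAt.fun_finsetProd (fun i _ => hA (σ i) i)

lemma matmul_hasDerivAt {N : ℕ} {A D : ℝ → Matrix (Fin N) (Fin N) ℝ}
    {A' D' : Matrix (Fin N) (Fin N) ℝ} {s : ℝ}
    (hA : ∀ i j, HasDerivAt (fun t => A t i j) (A' i j) s)
    (hD : ∀ i j, HasDerivAt (fun t => D t i j) (D' i j) s) (i j : Fin N) :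
    HasDerivAt (fun t => (A t * D t) i j) ((A' * D s + A s * D') i j) s := by
  simp only [Matrix.mul_apply, Matrix.add_apply]
  have := HasDerivAt.fun_sum (fun k (_ : k ∈ Finset.univ) => (hA i k).mul (hD k j))
  simpa [Finset.sum_add_distrib] using this

lemma matinv_hasDerivAt {N : ℕ} {A : ℝ → Matrix (Fin N) (Fin N) ℝ}
    {A' : Matrix (Fin N) (Fin N) ℝ} {s : ℝ}
    (hA : ∀ i j, HasDerivAt (fun t => A t i j) (A' i j) s)
    (hdet : (A s).det ≠ 0) (i j : Fin N) :
    HasDerivAt (fun t => (A t)⁻¹ i j) ((-((A s)⁻¹ * A' * (A s)⁻¹)) i j) s := by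
  have hdiff : ∀ i j, DifferentiableAt ℝ (fun t => A t i j) s :=
    fun i j => (hA i j).differentiableAt
  have hdetdiff : DifferentiableAt ℝ (fun t => (A t).det) s := diffAt_det hdiff
  -- differentiability of adjugate entries
  have hadjdiff : ∀ i j, DifferentiableAt ℝ (fun t => (A t).adjugate i j) s := by
    intro i j
    simp only [Matrix.adjugate_apply]
    apply diffAt_det
    intro k l
    rcases eq_or_ne k j with hk | hk
    · subst hk
      simp only [Matrix.updateRow_self]
      exact differentiableAt_const _
    · simp only [Matrix.updateRow_ne hk]
      exact hdiff k l
  have hinvdiff : ∀ i j, DifferentiableAt ℝ (fun t => (A t)⁻¹ i j) s := by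
    intro i j
    have : ∀ t, (A t)⁻¹ i j = ((A t).det)⁻¹ * (A t).adjugate i j := by
      intro t
      rw [Matrix.inv_def]
      simp [Ring.inverse_eq_inv']
    simp only [this]
    exact (hdetdiff.inv hdet).mul (hadjdiff i j)
  set R' : Matrix (Fin N) (Fin N) ℝ := Matrix.of fun i j => deriv (fun t => (A t)⁻¹ i j) s with hR'
  have hR : ∀ i j, HasDerivAt (fun t => (A t)⁻¹ i j) (R' i j) s :=
    fun i j => (hinvdiff i j).hasDerivAt
  -- eventual invertibility
  have hdetcont : ContinuousAt (fun t => (A t).det) s := hdetdiff.continuousAt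
  have hev : ∀ᶠ t in 𝓝 s, (A t).det ≠ 0 := hdetcont.eventually_ne hdet
  have hkey : A' * (A s)⁻¹ + A s * R' = 0 := by
    ext i j
    have hprod : HasDerivAt (fun t => (A t * (A t)⁻¹) i j)
        ((A' * (A s)⁻¹ + A s * R') i j) s := matmul_hasDerivAt hA hR i j
    have hconst : (fun t => (A t * (A t)⁻¹) i j) =ᶠ[𝓝 s]
        (fun _ => (1 : Matrix (Fin N) (Fin N) ℝ) i j) := by
      filter_upwards [hev] with t ht
      rw [Matrix.mul_nonsing_inv _ (isUnit_iff_ne_zero.2 ht)]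
    have hzero : HasDerivAt (fun t => (A t * (A t)⁻¹) i j) 0 s :=
      (hasDerivAt_const s _).congr_of_eventuallyEq hconst
    have := hprod.unique hzero
    simpa using this
  have hInv : (A s)⁻¹ * A s = 1 := Matrix.nonsing_inv_mul _ (isUnit_iff_ne_zero.2 hdet)
  have hR'eq : R' = -((A s)⁻¹ * A' * (A s)⁻¹) := by
    have h1 : A s * R' = -(A' * (A s)⁻¹) := by
      rw [eq_neg_iff_add_eq_zero, add_comm]
      exact hkey
    calc R' = ((A s)⁻¹ * A s) * R' := by rw [hInv, Matrix.one_mul]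
      _ = (A s)⁻¹ * (A s * R') := by rw [Matrix.mul_assoc]
      _ = (A s)⁻¹ * -(A' * (A s)⁻¹) := by rw [h1]
      _ = -((A s)⁻¹ * A' * (A s)⁻¹) := by rw [Matrix.mul_neg, Matrix.mul_assoc]
  rw [← hR'eq]
  exact hR i j


lemma integrableOn_Ioi_of_decay {φ : ℝ → ℝ} (hcont : Continuous φ) {c b : ℝ} (hb : 0 < b)
    (h : ∀ ξ, 0 ≤ ξ → |φ ξ| ≤ c * Real.exp (-b * ξ)) (a : ℝ) :
    IntegrableOn φ (Ioi a) := by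
  set M := max a 0 with hM
  have hsplit : Ioi a = Ioc a M ∪ Ioi M := (Ioc_union_Ioi_eq_Ioi (le_max_left a 0)).symm
  rw [hsplit]
  apply IntegrableOn.union
  · exact hcont.integrableOn_Ioc
  · apply Integrable.mono' (g := fun ξ => c * Real.exp (-b * ξ))
    · exact (exp_neg_integrableOn_Ioi M hb).const_mul c
    · exact hcont.aestronglyMeasurable.restrict
    · rw [ae_restrict_iff' measurableSet_Ioi]
      filter_upwards with ξ hξ
      rw [Real.norm_eq_abs]
      exact h ξ (le_trans (le_max_right a 0) (le_of_lt hξ))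

lemma hasDerivAt_integral_Ioi {φ : ℝ → ℝ} (hcont : Continuous φ)
    (hint : ∀ a : ℝ, IntegrableOn φ (Ioi a)) (s : ℝ) :
    HasDerivAt (fun t => ∫ ξ in Ioi t, φ ξ) (-(φ s)) s := by
  set a := s - 1 with ha
  have hkey : ∀ t, a < t → (∫ ξ in Ioi t, φ ξ) = (∫ ξ in Ioi a, φ ξ) - ∫ x in a..t, φ x := by
    intro t ht
    have hun : Ioc a t ∪ Ioi t = Ioi a := Ioc_union_Ioi_eq_Ioi (le_of_lt ht)
    have hdis : Disjoint (Ioc a t) (Ioi t) := by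
      apply Set.disjoint_left.2
      intro x hx hx'
      exact absurd hx.2 (not_le.2 hx')
    have := MeasureTheory.setIntegral_union hdis measurableSet_Ioi
      ((hint a).mono_set (by rw [← hun]; exact subset_union_left))
      ((hint a).mono_set (by rw [← hun]; exact subset_union_right)) (f := φ)
    rw [hun] at this
    rw [intervalIntegral.integral_of_le (le_of_lt ht), this]
    ring
  have hFTC : HasDerivAt (fun t => (∫ ξ in Ioi a, φ ξ) - ∫ x in a..t, φ x) (-(φ s)) s := by
    have h1 : HasDerivAt (fun t => ∫ x in a..t, φ x) (φ s) s :=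
      intervalIntegral.integral_hasDerivAt_right (hcont.intervalIntegrable a s)
        (hcont.stronglyMeasurable.stronglyMeasurableAtFilter) hcont.continuousAt
    simpa using h1.const_sub (∫ ξ in Ioi a, φ ξ)
  apply hFTC.congr_of_eventuallyEq
  filter_upwards [Ioi_mem_nhds (show a < s by rw [ha]; linarith)] with t ht
  exact hkey t ht


lemma sandwich_entry {N : ℕ} (V M : Matrix (Fin N) (Fin N) ℝ) (i j : Fin N) :
    (V * M * Vᵀ) i j = ∑ k, ∑ l, (V i k * V j l) * M k l := by
  simp only [Matrix.mul_apply, Matrix.transpose_apply, Finset.sum_mul, Finset.mul_sum]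
  rw [Finset.sum_comm]
  apply Finset.sum_congr rfl
  intro k _
  apply Finset.sum_congr rfl
  intro l _
  ring

lemma sandwich_quad {N : ℕ} (A M : Matrix (Fin N) (Fin N) ℝ) (x : Fin N → ℝ) :
    ((A * M * Aᵀ) *ᵥ x) ⬝ᵥ x = (M *ᵥ (Aᵀ *ᵥ x)) ⬝ᵥ (Aᵀ *ᵥ x) := by
  rw [← Matrix.mulVec_mulVec, ← Matrix.mulVec_mulVec]
  rw [dotProduct_comm, Matrix.dotProduct_mulVec, ← Matrix.mulVec_transpose]
  rw [dotProduct_comm]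

lemma quad_transpose {N : ℕ} (M : Matrix (Fin N) (Fin N) ℝ) (x : Fin N → ℝ) :
    (M *ᵥ x) ⬝ᵥ x = (Mᵀ *ᵥ x) ⬝ᵥ x := by
  rw [dotProduct_comm, Matrix.dotProduct_mulVec, ← Matrix.mulVec_transpose,
    dotProduct_comm]

end Helpers

/-- the Lyapunov equation for `Q_s` and the time derivative of
`Φ(s,x) = ½⟨Q_s⁻¹ x, x⟩`. -/
theorem statement1 (N : ℕ) (hN : 1 ≤ N)
    (Q B : ℝ → Matrix (Fin N) (Fin N) ℝ)
    (hQreg : ∀ i j, ContDiff ℝ 1 fun s => Q s i j)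
    (hQbd : ∃ C : ℝ, ∀ (s : ℝ) (i j : Fin N),
      |Q s i j| ≤ C ∧ |deriv (fun t => Q t i j) s| ≤ C)
    (hBcont : ∀ i j, Continuous fun s => B s i j)
    (hBbd : ∃ C : ℝ, ∀ (s : ℝ) (i j : Fin N), |B s i j| ≤ C)
    (hQsym : ∀ s, (Q s)ᵀ = Q s)
    (η₀ : ℝ) (hη₀ : 0 < η₀)
    (hQell : ∀ (s : ℝ) (ξ : Fin N → ℝ),
      η₀ * enorm2 ξ ^ 2 ≤ ∑ i, (Q s).mulVec ξ i * ξ i)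
    (U : ℝ → ℝ → Matrix (Fin N) (Fin N) ℝ)
    (hU0 : ∀ r, U r r = 1)
    (hUderiv : ∀ (r s : ℝ) (i j : Fin N),
      HasDerivAt (fun t => U t r i j) ((B s * U s r) i j) s)
    (C₀ ω : ℝ) (hC₀ : 0 < C₀) (hω : 0 < ω)
    (hdecay : ∀ r s : ℝ, r ≤ s → opNorm (U r s) ≤ C₀ * Real.exp (-ω * (s - r)))
    (Qs : ℝ → Matrix (Fin N) (Fin N) ℝ)
    (hQs : ∀ (s : ℝ) (i j : Fin N),
      Qs s i j = ∫ ξ in Set.Ioi s, (U s ξ * Q ξ * (U s ξ)ᵀ) i j)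
    :
    (∀ (s : ℝ) (i j : Fin N),
      HasDerivAt (fun t => Qs t i j) ((-(Q s) + B s * Qs s + Qs s * (B s)ᵀ) i j) s) ∧
    (∀ (s : ℝ) (x : Fin N → ℝ),
      HasDerivAt (fun t => (1 / 2) * ∑ i, (Qs t)⁻¹.mulVec x i * x i)
        ((1 / 2) * (∑ i, (Q s).mulVec ((Qs s)⁻¹.mulVec x) i * ((Qs s)⁻¹.mulVec x) i)
          - ∑ i, ((Qs s)⁻¹ * B s).mulVec x i * x i) s) := by
  obtain ⟨CB, hCB⟩ := hBbd
  obtain ⟨CQ, hCQ⟩ := hQbd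
  have i0 : Fin N := ⟨0, hN⟩
  have hCQ0 : 0 ≤ CQ := le_trans (abs_nonneg _) (hCQ 0 i0 i0).1
  -- V and W
  set V : ℝ → Matrix (Fin N) (Fin N) ℝ := fun t => U t 0 with hVdef
  set W : ℝ → Matrix (Fin N) (Fin N) ℝ := fun ξ => U 0 ξ with hWdef
  have hVderiv : ∀ (s : ℝ) (i j : Fin N),
      HasDerivAt (fun t => V t i j) ((B s * V s) i j) s := fun s i j => hUderiv 0 s i j
  have hVcont : ∀ i j, Continuous fun t => V t i j := by
    intro i j
    rw [continuous_iff_continuousAt]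
    exact fun s => (hVderiv s i j).continuousAt
  -- cocycle
  have hcocycle : ∀ ξ t, U t ξ = V t * W ξ := by
    intro ξ
    have := matode_unique B CB hCB (fun t => U t ξ) (fun t => V t * W ξ)
      (fun s i j => hUderiv ξ s i j)
      (fun s i j => by
        have h1 := matmul_hasDerivAt (A := V) (D := fun _ => W ξ)
          (A' := B s * V s) (D' := 0) (fun i j => hVderiv s i j)
          (fun i j => hasDerivAt_const s _) i j
        simpa [Matrix.mul_assoc] using h1)
      0 (by simp [hWdef, hVdef, hU0 0, Matrix.one_mul])
    exact fun t => this t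
  have hVW : ∀ ξ, V ξ * W ξ = 1 := by
    intro ξ
    have := hcocycle ξ ξ
    rw [hU0 ξ] at this
    exact this.symm
  have hWV : ∀ ξ, W ξ * V ξ = 1 := fun ξ => mul_eq_one_comm.mp (hVW ξ)
  have hVdet : ∀ ξ, (V ξ).det ≠ 0 := by
    intro ξ
    have : IsUnit (V ξ).det := Matrix.isUnit_det_of_right_inverse (hVW ξ)
    exact this.ne_zero
  have hWinv : ∀ ξ, (V ξ)⁻¹ = W ξ := fun ξ => Matrix.inv_eq_right_inv (hVW ξ)
  have hWderiv : ∀ (s : ℝ) (i j : Fin N),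
      HasDerivAt (fun ξ => W ξ i j) ((-(W s * B s)) i j) s := by
    intro s i j
    have h1 := matinv_hasDerivAt (A := V) (A' := B s * V s)
      (fun i j => hVderiv s i j) (hVdet s) i j
    have e1 : (fun t => (V t)⁻¹ i j) = fun t => W t i j := by
      funext t; rw [hWinv t]
    have e2 : -((V s)⁻¹ * (B s * V s) * (V s)⁻¹) = -(W s * B s) := by
      rw [hWinv s]
      rw [show W s * (B s * V s) * W s = W s * B s * (V s * W s) by
        rw [Matrix.mul_assoc, Matrix.mul_assoc, Matrix.mul_assoc]]
      rw [hVW s, Matrix.mul_one]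
    rw [e1, e2] at h1
    exact h1
  have hWcont : ∀ i j, Continuous fun ξ => W ξ i j := by
    intro i j
    rw [continuous_iff_continuousAt]
    exact fun s => (hWderiv s i j).continuousAt
  have hQcont : ∀ i j, Continuous fun s => Q s i j := fun i j => (hQreg i j).continuous
  -- the function g
  set g : ℝ → Matrix (Fin N) (Fin N) ℝ := fun ξ => W ξ * Q ξ * (W ξ)ᵀ with hgdef
  have hgcont : ∀ i j, Continuous fun ξ => g ξ i j := by
    intro i j
    simp only [hgdef, Matrix.mul_apply, Matrix.transpose_apply]
    apply continuous_finset_sum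
    intro l _
    apply Continuous.mul _ (hWcont j l)
    apply continuous_finset_sum
    intro k _
    exact (hWcont i k).mul (hQcont k l)
  have hWbd : ∀ ξ, 0 ≤ ξ → ∀ i j, |W ξ i j| ≤ C₀ * Real.exp (-ω * ξ) := by
    intro ξ hξ i j
    have h1 := abs_entry_le_opNorm (W ξ) i j
    have h2 := hdecay 0 ξ hξ
    simpa [hWdef] using h1.trans h2
  have hgbd : ∀ i j, ∀ ξ, 0 ≤ ξ →
      |g ξ i j| ≤ ((N : ℝ)^2 * CQ * C₀^2) * Real.exp (-(2*ω) * ξ) := by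
    intro i j ξ hξ
    have expand : g ξ i j = ∑ l, (∑ k, W ξ i k * Q ξ k l) * W ξ j l := by
      simp [hgdef, Matrix.mul_apply, Matrix.transpose_apply]
    rw [expand]
    have hterm : ∀ l : Fin N, |(∑ k, W ξ i k * Q ξ k l) * W ξ j l| ≤
        (N : ℝ) * (CQ * (C₀ * Real.exp (-ω * ξ))^2) := by
      intro l
      rw [abs_mul]
      have h1 : |∑ k, W ξ i k * Q ξ k l| ≤ (N:ℝ) * (C₀ * Real.exp (-ω * ξ) * CQ) := by
        calc |∑ k, W ξ i k * Q ξ k l| ≤ ∑ k, |W ξ i k * Q ξ k l| :=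
              Finset.abs_sum_le_sum_abs _ _
          _ ≤ ∑ _k : Fin N, C₀ * Real.exp (-ω * ξ) * CQ := by
              apply Finset.sum_le_sum
              intro k _
              rw [abs_mul]
              exact mul_le_mul (hWbd ξ hξ i k) (hCQ ξ k l).1 (abs_nonneg _)
                (by positivity)
          _ = (N:ℝ) * (C₀ * Real.exp (-ω * ξ) * CQ) := by simp [mul_comm]
      have h2 : |W ξ j l| ≤ C₀ * Real.exp (-ω * ξ) := hWbd ξ hξ j l
      calc |∑ k, W ξ i k * Q ξ k l| * |W ξ j l|
          ≤ ((N:ℝ) * (C₀ * Real.exp (-ω * ξ) * CQ)) * (C₀ * Real.exp (-ω * ξ)) :=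
            mul_le_mul h1 h2 (abs_nonneg _) (by positivity)
        _ = (N : ℝ) * (CQ * (C₀ * Real.exp (-ω * ξ))^2) := by ring
    calc |∑ l, (∑ k, W ξ i k * Q ξ k l) * W ξ j l|
        ≤ ∑ l, |(∑ k, W ξ i k * Q ξ k l) * W ξ j l| := Finset.abs_sum_le_sum_abs _ _
      _ ≤ ∑ _l : Fin N, (N : ℝ) * (CQ * (C₀ * Real.exp (-ω * ξ))^2) :=
          Finset.sum_le_sum (fun l _ => hterm l)
      _ = ((N : ℝ)^2 * CQ * C₀^2) * Real.exp (-(2*ω) * ξ) := by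
          have he : Real.exp (-ω * ξ) * Real.exp (-ω * ξ) = Real.exp (-(2*ω) * ξ) := by
            rw [← Real.exp_add]; congr 1; ring
          simp only [Finset.sum_const, Finset.card_univ, Fintype.card_fin, nsmul_eq_mul]
          rw [mul_pow, pow_two (Real.exp (-ω * ξ)), he]
          ring
  have hgint : ∀ (i j : Fin N) (a : ℝ), IntegrableOn (fun ξ => g ξ i j) (Ioi a) := by
    intro i j a
    exact integrableOn_Ioi_of_decay (hgcont i j) (by positivity : (0:ℝ) < 2*ω)
      (fun ξ hξ => hgbd i j ξ hξ) a
  -- G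
  set G : ℝ → Matrix (Fin N) (Fin N) ℝ :=
    fun t => Matrix.of fun k l => ∫ ξ in Ioi t, g ξ k l with hGdef
  have hGderiv : ∀ (s : ℝ) (k l : Fin N),
      HasDerivAt (fun t => G t k l) ((-(g s)) k l) s := by
    intro s k l
    have := hasDerivAt_integral_Ioi (hgcont k l) (hgint k l) s
    simpa [hGdef] using this
  -- representation of Qs
  have hrep : ∀ t, Qs t = V t * G t * (V t)ᵀ := by
    intro t
    ext i j
    rw [hQs t i j]
    have hptwise : ∀ ξ, (U t ξ * Q ξ * (U t ξ)ᵀ) i j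
        = ∑ k, ∑ l, (V t i k * V t j l) * g ξ k l := by
      intro ξ
      rw [hcocycle ξ t]
      have e : V t * W ξ * Q ξ * (V t * W ξ)ᵀ = V t * g ξ * (V t)ᵀ := by
        rw [Matrix.transpose_mul, hgdef]
        simp only [Matrix.mul_assoc]
      rw [e, sandwich_entry]
    simp only [hptwise]
    rw [MeasureTheory.integral_finset_sum]
    · have hinner : ∀ k, (∫ ξ in Ioi t, ∑ l, (V t i k * V t j l) * g ξ k l)
          = ∑ l, (V t i k * V t j l) * G t k l := by
        intro k
        rw [MeasureTheory.integral_finset_sum]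
        · exact Finset.sum_congr rfl fun l _ => by
            rw [MeasureTheory.integral_const_mul]; rfl
        · intro l _
          exact ((hgint k l t).const_mul _)
      simp only [hinner]
      rw [sandwich_entry]
    · intro k _
      apply MeasureTheory.integrable_finset_sum
      intro l _
      exact ((hgint k l t).const_mul _)
  -- V g Vᵀ = Q
  have hVgV : ∀ s, V s * g s * (V s)ᵀ = Q s := by
    intro s
    rw [hgdef]
    calc V s * (W s * Q s * (W s)ᵀ) * (V s)ᵀ
        = (V s * W s) * Q s * ((W s)ᵀ * (V s)ᵀ) := by simp only [Matrix.mul_assoc]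
      _ = (V s * W s) * Q s * (V s * W s)ᵀ := by rw [Matrix.transpose_mul]
      _ = Q s := by rw [hVW s]; simp
  -- Part 1
  have hpart1 : ∀ (s : ℝ) (i j : Fin N),
      HasDerivAt (fun t => Qs t i j) ((-(Q s) + B s * Qs s + Qs s * (B s)ᵀ) i j) s := by
    intro s i j
    have hVG : ∀ i j, HasDerivAt (fun t => (V t * G t) i j)
        (((B s * V s) * G s + V s * (-(g s))) i j) s :=
      fun i j => matmul_hasDerivAt (fun i j => hVderiv s i j) (fun i j => hGderiv s i j) i j
    have hVT : ∀ i j, HasDerivAt (fun t => (V t)ᵀ i j) (((B s * V s)ᵀ) i j) s := by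
      intro i j
      simpa [Matrix.transpose_apply] using hVderiv s j i
    have hfull := matmul_hasDerivAt (A := fun t => V t * G t) (D := fun t => (V t)ᵀ)
      (A' := (B s * V s) * G s + V s * (-(g s))) (D' := (B s * V s)ᵀ)
      hVG hVT i j
    have heqfun : (fun t => (V t * G t * (V t)ᵀ) i j) = fun t => Qs t i j := by
      funext t; rw [hrep t]
    rw [heqfun] at hfull
    have hval : ((B s * V s) * G s + V s * (-(g s))) * (V s)ᵀ
        + (V s * G s) * (B s * V s)ᵀ
        = -(Q s) + B s * Qs s + Qs s * (B s)ᵀ := by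
      rw [hrep s]
      rw [Matrix.transpose_mul]
      rw [Matrix.add_mul]
      rw [Matrix.mul_neg, Matrix.neg_mul]
      rw [← hVgV s]
      simp only [Matrix.mul_assoc]
      abel
    rw [hval] at hfull
    exact hfull
  refine ⟨hpart1, ?_⟩
  -- symmetry of Qs
  have hsand_sym : ∀ (s ξ : ℝ), (U s ξ * Q ξ * (U s ξ)ᵀ)ᵀ = U s ξ * Q ξ * (U s ξ)ᵀ := by
    intro s ξ
    rw [Matrix.transpose_mul, Matrix.transpose_mul, Matrix.transpose_transpose, hQsym,
      Matrix.mul_assoc]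
  have hQsymm : ∀ s, (Qs s)ᵀ = Qs s := by
    intro s
    ext i j
    rw [Matrix.transpose_apply, hQs s j i, hQs s i j]
    congr 1
    funext ξ
    conv_lhs => rw [← hsand_sym s ξ]
    rw [Matrix.transpose_apply]
  -- positivity
  have hPD : ∀ (s : ℝ) (x : Fin N → ℝ), x ≠ 0 →
      0 < ∑ i, (Qs s).mulVec x i * x i := by
    intro s x hx
    set f : ℝ → Matrix (Fin N) (Fin N) ℝ := fun ξ => U s ξ * Q ξ * (U s ξ)ᵀ with hfdef
    have hfentry : ∀ ξ (i j : Fin N), f ξ i j = ∑ k, ∑ l, (V s i k * V s j l) * g ξ k l := by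
      intro ξ i j
      show (U s ξ * Q ξ * (U s ξ)ᵀ) i j = _
      rw [hcocycle ξ s]
      have e : V s * W ξ * Q ξ * (V s * W ξ)ᵀ = V s * g ξ * (V s)ᵀ := by
        rw [Matrix.transpose_mul, hgdef]
        simp only [Matrix.mul_assoc]
      rw [e, sandwich_entry]
    have hfint : ∀ i j, IntegrableOn (fun ξ => f ξ i j) (Ioi s) := by
      intro i j
      simp only [hfentry]
      apply MeasureTheory.integrable_finset_sum
      intro k _
      apply MeasureTheory.integrable_finset_sum
      intro l _
      exact ((hgint k l s).const_mul _)
    set ψ : ℝ → ℝ := fun ξ => (f ξ *ᵥ x) ⬝ᵥ x with hψdef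
    have hψexp : ∀ ξ, ψ ξ = ∑ i, ∑ j, f ξ i j * x j * x i := by
      intro ξ
      show (f ξ *ᵥ x) ⬝ᵥ x = _
      simp only [dotProduct, Matrix.mulVec, Finset.sum_mul]
    have hB : (∫ ξ in Ioi s, ψ ξ) = ∑ i, ∑ j, (∫ ξ in Ioi s, f ξ i j) * x j * x i := by
      simp only [hψexp]
      rw [MeasureTheory.integral_finset_sum _ (fun i _ => by
        apply MeasureTheory.integrable_finset_sum
        intro j _
        exact ((hfint i j).mul_const _).mul_const _)]
      apply Finset.sum_congr rfl
      intro i _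
      rw [MeasureTheory.integral_finset_sum _ (fun j _ =>
        ((hfint i j).mul_const _).mul_const _)]
      apply Finset.sum_congr rfl
      intro j _
      rw [MeasureTheory.integral_mul_const, MeasureTheory.integral_mul_const]
    have hA : ∑ i, (Qs s).mulVec x i * x i = ∫ ξ in Ioi s, ψ ξ := by
      rw [hB]
      apply Finset.sum_congr rfl
      intro i _
      show (∑ j, Qs s i j * x j) * x i = _
      rw [Finset.sum_mul]
      apply Finset.sum_congr rfl
      intro j _
      rw [hQs s i j]
    set y : ℝ → Fin N → ℝ := fun ξ => (U s ξ)ᵀ *ᵥ x with hydef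
    have hψy : ∀ ξ, ψ ξ = (Q ξ *ᵥ y ξ) ⬝ᵥ y ξ := fun ξ => sandwich_quad (U s ξ) (Q ξ) x
    have hUcont : ∀ (i j : Fin N), Continuous fun ξ => U s ξ i j := by
      intro i j
      have e : (fun ξ => U s ξ i j) = fun ξ => (V s * W ξ) i j := by
        funext ξ; rw [hcocycle ξ s]
      rw [e]
      simp only [Matrix.mul_apply]
      apply continuous_finset_sum
      intro k _
      exact continuous_const.mul (hWcont k j)
    have hycont : ∀ i, Continuous fun ξ => y ξ i := by
      intro i
      have e : (fun ξ => y ξ i) = fun ξ => ∑ j, U s ξ j i * x j := by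
        funext ξ
        show ((U s ξ)ᵀ *ᵥ x) i = _
        simp only [Matrix.mulVec, dotProduct, Matrix.transpose_apply]
      rw [e]
      apply continuous_finset_sum
      intro j _
      exact (hUcont j i).mul continuous_const
    have hyne : ∀ ξ, y ξ ≠ 0 := by
      intro ξ hy0
      have hdetU : IsUnit ((U s ξ)ᵀ).det := by
        rw [Matrix.det_transpose, hcocycle ξ s, Matrix.det_mul]
        exact (Matrix.isUnit_det_of_right_inverse (hVW s)).mul
          (Matrix.isUnit_det_of_right_inverse (hWV ξ))
      have hxz : x = 0 := by
        have h1 : ((U s ξ)ᵀ)⁻¹ *ᵥ (y ξ) = x := by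
          show ((U s ξ)ᵀ)⁻¹ *ᵥ ((U s ξ)ᵀ *ᵥ x) = x
          rw [Matrix.mulVec_mulVec, Matrix.nonsing_inv_mul _ hdetU, Matrix.one_mulVec]
        rw [hy0, Matrix.mulVec_zero] at h1
        exact h1.symm
      exact hx hxz
    set φ : ℝ → ℝ := fun ξ => η₀ * ∑ i, (y ξ i)^2 with hφdef
    have hφpos : ∀ ξ, 0 < φ ξ := by
      intro ξ
      apply mul_pos hη₀
      obtain ⟨i, hi⟩ := Function.ne_iff.mp (hyne ξ)
      apply Finset.sum_pos' (fun k _ => sq_nonneg _)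
      refine ⟨i, Finset.mem_univ i, ?_⟩
      have : y ξ i ≠ 0 := hi
      positivity
    have hφcont : Continuous φ := by
      apply continuous_const.mul
      apply continuous_finset_sum
      intro i _
      exact (hycont i).pow 2
    have hφleψ : ∀ ξ, φ ξ ≤ ψ ξ := by
      intro ξ
      rw [hψy ξ]
      have h1 := hQell ξ (y ξ)
      have he : enorm2 (y ξ) ^ 2 = ∑ i, (y ξ i)^2 := by
        rw [enorm2, Real.sq_sqrt]
        positivity
      rw [he] at h1
      exact h1
    have hψnn : ∀ ξ, 0 ≤ ψ ξ := fun ξ => le_trans (le_of_lt (hφpos ξ)) (hφleψ ξ)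
    have hψint : IntegrableOn ψ (Ioi s) := by
      have e : ψ = fun ξ => ∑ i, ∑ j, f ξ i j * x j * x i := funext hψexp
      rw [e]
      apply MeasureTheory.integrable_finset_sum
      intro i _
      apply MeasureTheory.integrable_finset_sum
      intro j _
      exact ((hfint i j).mul_const _).mul_const _
    have h1 : (0:ℝ) < ∫ ξ in Ioc s (s+1), φ ξ := by
      rw [← intervalIntegral.integral_of_le (by linarith : s ≤ s+1)]
      exact intervalIntegral.intervalIntegral_pos_of_pos_on
        (hφcont.intervalIntegrable s (s+1)) (fun ξ _ => hφpos ξ) (by linarith)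
    have h2 : (∫ ξ in Ioc s (s+1), φ ξ) ≤ ∫ ξ in Ioc s (s+1), ψ ξ :=
      MeasureTheory.setIntegral_mono_on (hφcont.integrableOn_Ioc)
        (hψint.mono_set Ioc_subset_Ioi_self) measurableSet_Ioc (fun ξ _ => hφleψ ξ)
    have h3 : (∫ ξ in Ioc s (s+1), ψ ξ) ≤ ∫ ξ in Ioi s, ψ ξ :=
      MeasureTheory.setIntegral_mono_set hψint
        (Filter.Eventually.of_forall hψnn)
        (HasSubset.Subset.eventuallyLE Ioc_subset_Ioi_self)
    rw [hA]
    linarith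
  have hdetQs : ∀ s, IsUnit (Qs s).det := by
    intro s
    have hpd : (Qs s).PosDef := by
      refine Matrix.PosDef.of_dotProduct_mulVec_pos ?_ ?_
      · show (Qs s)ᴴ = Qs s
        have e : (Qs s)ᴴ = (Qs s)ᵀ := by
          ext i j
          simp [Matrix.conjTranspose_apply]
        rw [e, hQsymm]
      · intro x hx
        have h := hPD s x hx
        have e : star x ⬝ᵥ (Qs s *ᵥ x) = ∑ i, (Qs s).mulVec x i * x i := by
          simp only [dotProduct, star_trivial]
          apply Finset.sum_congr rfl
          intro i _
          ring
        rw [e]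
        exact h
    exact hpd.det_pos.ne'.isUnit
  -- Part 2
  intro s x
  set R : Matrix (Fin N) (Fin N) ℝ := (Qs s)⁻¹ with hRdef
  set Qd : Matrix (Fin N) (Fin N) ℝ := -(Q s) + B s * Qs s + Qs s * (B s)ᵀ with hQddef
  have hdet0 : (Qs s).det ≠ 0 := (hdetQs s).ne_zero
  have hRd : ∀ i j, HasDerivAt (fun t => (Qs t)⁻¹ i j) ((-(R * Qd * R)) i j) s := by
    intro i j
    exact matinv_hasDerivAt (fun i j => hpart1 s i j) hdet0 i j
  have hmul1 : Qs s * R = 1 := Matrix.mul_nonsing_inv _ (hdetQs s)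
  have hmul2 : R * Qs s = 1 := Matrix.nonsing_inv_mul _ (hdetQs s)
  have hRsym : Rᵀ = R := by
    rw [hRdef, Matrix.transpose_nonsing_inv, hQsymm]
  have hkey : -(R * Qd * R) = R * Q s * R - R * B s - (B s)ᵀ * R := by
    have e1 : R * -(Q s) * R = -(R * Q s * R) := by
      rw [Matrix.mul_neg, Matrix.neg_mul]
    have e2 : R * (B s * Qs s) * R = R * B s := by
      rw [← Matrix.mul_assoc, Matrix.mul_assoc (R * B s) (Qs s) R, hmul1, Matrix.mul_one]
    have e3 : R * (Qs s * (B s)ᵀ) * R = (B s)ᵀ * R := by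
      rw [← Matrix.mul_assoc, hmul2, Matrix.one_mul]
    rw [hQddef, Matrix.mul_add, Matrix.mul_add, Matrix.add_mul, Matrix.add_mul,
      e1, e2, e3]
    abel
  have hsum : HasDerivAt (fun t => (1/2 : ℝ) * ∑ i, (Qs t)⁻¹.mulVec x i * x i)
      ((1/2 : ℝ) * ∑ i, (∑ j, (-(R * Qd * R)) i j * x j) * x i) s := by
    apply HasDerivAt.const_mul
    have hfun : (fun t => ∑ i, (Qs t)⁻¹.mulVec x i * x i)
        = fun t => ∑ i, (∑ j, (Qs t)⁻¹ i j * x j) * x i := rfl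
    rw [hfun]
    apply HasDerivAt.fun_sum
    intro i _
    apply HasDerivAt.mul_const
    apply HasDerivAt.fun_sum
    intro j _
    exact (hRd i j).mul_const _
  have hvalue : (1/2 : ℝ) * ∑ i, (∑ j, (-(R * Qd * R)) i j * x j) * x i
      = (1 / 2) * (∑ i, (Q s).mulVec ((Qs s)⁻¹.mulVec x) i * ((Qs s)⁻¹.mulVec x) i)
        - ∑ i, ((Qs s)⁻¹ * B s).mulVec x i * x i := by
    have hq1 : ((R * Q s * R) *ᵥ x) ⬝ᵥ x = (Q s *ᵥ (R *ᵥ x)) ⬝ᵥ (R *ᵥ x) := by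
      have h := sandwich_quad R (Q s) x
      rw [hRsym] at h
      exact h
    have hq2 : (((B s)ᵀ * R) *ᵥ x) ⬝ᵥ x = ((R * B s) *ᵥ x) ⬝ᵥ x := by
      have h := quad_transpose ((B s)ᵀ * R) x
      rw [Matrix.transpose_mul, Matrix.transpose_transpose, hRsym] at h
      exact h
    have hlin : (-(R * Qd * R)) *ᵥ x ⬝ᵥ x
        = ((R * Q s * R) *ᵥ x ⬝ᵥ x) - ((R * B s) *ᵥ x ⬝ᵥ x) - (((B s)ᵀ * R) *ᵥ x ⬝ᵥ x) := by
      rw [hkey, Matrix.sub_mulVec, Matrix.sub_mulVec, sub_dotProduct,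
        sub_dotProduct]
    have hLHS : ∑ i, (∑ j, (-(R * Qd * R)) i j * x j) * x i = (-(R * Qd * R)) *ᵥ x ⬝ᵥ x := rfl
    rw [hLHS, hlin, hq1, hq2]
    show _ = (1/2) * ((Q s *ᵥ (R *ᵥ x)) ⬝ᵥ (R *ᵥ x)) - ((R * B s) *ᵥ x ⬝ᵥ x)
    ring
  rw [hvalue] at hsum
  exact hsum
end
end

section
/- Let W ∈ C^1(ℝ^{1+N}) satisfy W > 0, |D_s W| ≤ β W² and |∇_x W| ≤ γ W^{3/2} on ℝ^{1+N} for constants β, γ > 0. Fix (s₀, x₀) ∈ ℝ^{1+N} and real numbers ℓ₁, ℓ₂ ≥ 1, and set τ = (4 β ℓ₁ W(s₀,x₀))^{-1} and r = √3 (2 ℓ₂ γ W(s₀,x₀)^{1/2})^{-1}. Then for all (s,x) with |s − s₀| < τ and |x − x₀| < r: ((2ℓ₂ − 1)√3 / (4ℓ₂)) W(s,x)^{1/2} ≤ W(s₀,x₀)^{1/2} ≤ ((2ℓ₂ + 1)√5 / (4ℓ₂)) W(s,x)^{1/2}. -/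
noncomputable section
open MeasureTheory Real Set Filter ENNReal NNReal Matrix

/-- Points of `ℝ^{1+N}`, written as `(s, x)` with `s ∈ ℝ` (time) and `x ∈ ℝ^N` (space). -/
abbrev Pt (N : ℕ) := ℝ × (Fin N → ℝ)

/-- The time derivative `D_s u`. -/
def pT {N : ℕ} (u : Pt N → ℝ) (q : Pt N) : ℝ := fderiv ℝ u q (1, 0)

/-- The spatial partial derivative `D_j u`. -/
def pX {N : ℕ} (j : Fin N) (u : Pt N → ℝ) (q : Pt N) : ℝ :=
  fderiv ℝ u q (0, Pi.single j 1)

/-- The spatial gradient `∇_x u`. -/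
def gradX {N : ℕ} (u : Pt N → ℝ) (q : Pt N) : Fin N → ℝ := fun j => pX j u q

/-- The spatial Laplacian `Δu = D_1² u + … + D_N² u`. -/
def lapX {N : ℕ} (u : Pt N → ℝ) (q : Pt N) : ℝ := ∑ j, pX j (pX j u) q

/-- The spatial divergence `div_x F` of a (spatially differentiable) vector field,
computed via spatial Fréchet derivatives. -/
def divXs {N : ℕ} (F : Pt N → Fin N → ℝ) (q : Pt N) : ℝ :=
  ∑ j, fderiv ℝ (fun x => F (q.1, x) j) q.2 (Pi.single j 1)

/-- The second-order term in divergence form, `div_x (a ∇_x u)`. -/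
def divAGrad {N : ℕ} (a : Pt N → Matrix (Fin N) (Fin N) ℝ) (u : Pt N → ℝ)
    (q : Pt N) : ℝ :=
  ∑ i, pX i (fun r => ∑ j, a r i j * pX j u r) q

/-- Cauchy–Schwarz for the spatial directional derivative. -/
lemma cs_aux {N : ℕ} (W : Pt N → ℝ) (q : Pt N) (d : Fin N → ℝ) :
    |fderiv ℝ W q ((0 : ℝ), d)| ≤ enorm2 (gradX W q) * enorm2 d := by
  have hd : ((0 : ℝ), d) = ∑ j, d j • (((0 : ℝ), (Pi.single j 1 : Fin N → ℝ)) : Pt N) := by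
    have hsum : d = ∑ j, d j • (Pi.single j 1 : Fin N → ℝ) := by
      rw [← Finset.univ_sum_single d]
      congr 1; funext j; funext k
      by_cases h : k = j <;> simp [Pi.single_apply, h]
    have h2 : (∑ j, d j • (((0 : ℝ), (Pi.single j 1 : Fin N → ℝ)) : Pt N))
        = ((0 : ℝ), ∑ j, d j • (Pi.single j 1 : Fin N → ℝ)) := by
      rw [Prod.ext_iff]
      constructor
      · rw [Prod.fst_sum]; simp
      · rw [Prod.snd_sum]; rfl
    rw [h2, ← hsum]
  have heq : fderiv ℝ W q ((0 : ℝ), d) = ∑ j, d j * pX j W q := by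
    rw [hd, map_sum]
    exact Finset.sum_congr rfl fun j _ => by rw [_root_.map_smul]; rfl
  rw [heq]
  have h1 : (∑ j, d j * pX j W q) ^ 2 ≤ (∑ j, (pX j W q) ^ 2) * (∑ j, d j ^ 2) := by
    have h := Finset.sum_mul_sq_le_sq_mul_sq Finset.univ (fun j => pX j W q) d
    calc (∑ j, d j * pX j W q) ^ 2 = (∑ j, pX j W q * d j) ^ 2 := by
          congr 1; exact Finset.sum_congr rfl fun j _ => mul_comm _ _
      _ ≤ _ := h
  calc |∑ j, d j * pX j W q| = Real.sqrt ((∑ j, d j * pX j W q) ^ 2) :=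
        (Real.sqrt_sq_eq_abs _).symm
    _ ≤ Real.sqrt ((∑ j, (pX j W q) ^ 2) * (∑ j, d j ^ 2)) := Real.sqrt_le_sqrt h1
    _ = enorm2 (gradX W q) * enorm2 d := by
        rw [Real.sqrt_mul (by positivity)]; rfl

/-- Time Lipschitz bound for `W⁻¹`. -/
lemma time_lip {N : ℕ} (W : Pt N → ℝ) (hWreg : ContDiff ℝ 1 W) (hWpos : ∀ q, 0 < W q)
    (β : ℝ) (hWt : ∀ q, |pT W q| ≤ β * W q ^ 2) (x : Fin N → ℝ) (s₁ s₂ : ℝ) :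
    |(W (s₂, x))⁻¹ - (W (s₁, x))⁻¹| ≤ β * |s₂ - s₁| := by
  have hdiff : Differentiable ℝ W := hWreg.differentiable one_ne_zero
  have hder : ∀ s : ℝ, HasDerivAt (fun t => (W (t, x))⁻¹)
      (-(pT W (s, x)) / (W (s, x)) ^ 2) s := by
    intro s
    have hc : HasDerivAt (fun t : ℝ => ((t, x) : Pt N)) ((1 : ℝ), (0 : Fin N → ℝ)) s :=
      (hasDerivAt_id s).prodMk (hasDerivAt_const s x)
    have hu : HasDerivAt (fun t => W (t, x)) (pT W (s, x)) s :=
      (hdiff (s, x)).hasFDerivAt.comp_hasDerivAt s hc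
    exact hu.inv (hWpos _).ne'
  have hbound : ∀ s : ℝ, ‖-(pT W (s, x)) / (W (s, x)) ^ 2‖ ≤ β := by
    intro s
    rw [Real.norm_eq_abs, abs_div, abs_neg, abs_of_pos (pow_pos (hWpos _) 2)]
    rw [div_le_iff₀ (pow_pos (hWpos _) 2)]
    exact hWt _
  have := Convex.norm_image_sub_le_of_norm_hasDerivWithin_le
    (f := fun t => (W (t, x))⁻¹) (f' := fun s => -(pT W (s, x)) / (W (s, x)) ^ 2)
    (s := Set.univ) (fun s _ => (hder s).hasDerivWithinAt) (fun s _ => hbound s)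
    convex_univ (Set.mem_univ s₁) (Set.mem_univ s₂)
  simpa [Real.norm_eq_abs] using this

/-- Space Lipschitz bound for `(√W)⁻¹`. -/
lemma space_lip {N : ℕ} (W : Pt N → ℝ) (hWreg : ContDiff ℝ 1 W) (hWpos : ∀ q, 0 < W q)
    (γ : ℝ) (hγ : 0 < γ) (hWx : ∀ q, enorm2 (gradX W q) ≤ γ * W q ^ ((3 : ℝ) / 2))
    (s : ℝ) (x₁ x₂ : Fin N → ℝ) :
    |(Real.sqrt (W (s, x₂)))⁻¹ - (Real.sqrt (W (s, x₁)))⁻¹| ≤ γ / 2 * enorm2 (x₂ - x₁) := by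
  have hdiff : Differentiable ℝ W := hWreg.differentiable one_ne_zero
  set d : Fin N → ℝ := x₂ - x₁ with hdd
  set p : ℝ → Fin N → ℝ := fun t => x₁ + t • d with hp
  set u : ℝ → ℝ := fun t => W (s, p t) with hu
  have hud : ∀ t : ℝ, HasDerivAt u (fderiv ℝ W (s, p t) ((0 : ℝ), d)) t := by
    intro t
    have hpc : HasDerivAt p d t := by
      have : HasDerivAt (fun t : ℝ => t • d) d t := by
        simpa using (hasDerivAt_id t).smul_const d
      exact this.const_add x₁
    have hc : HasDerivAt (fun t : ℝ => ((s, p t) : Pt N)) ((0 : ℝ), d) t :=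
      (hasDerivAt_const t s).prodMk hpc
    exact (hdiff (s, p t)).hasFDerivAt.comp_hasDerivAt t hc
  set h : ℝ → ℝ := fun t => (Real.sqrt (u t))⁻¹ with hh
  have hupos : ∀ t, 0 < u t := fun t => hWpos _
  have hder : ∀ t : ℝ, HasDerivAt h
      (-(1 / (2 * Real.sqrt (u t)) * fderiv ℝ W (s, p t) ((0 : ℝ), d)) / (Real.sqrt (u t)) ^ 2)
      t := by
    intro t
    have h1 : HasDerivAt (fun t => Real.sqrt (u t))
        (1 / (2 * Real.sqrt (u t)) * fderiv ℝ W (s, p t) ((0 : ℝ), d)) t :=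
      (Real.hasDerivAt_sqrt (hupos t).ne').comp t (hud t)
    exact h1.inv (Real.sqrt_pos.2 (hupos t)).ne'
  have hbound : ∀ t : ℝ,
      ‖-(1 / (2 * Real.sqrt (u t)) * fderiv ℝ W (s, p t) ((0 : ℝ), d)) / (Real.sqrt (u t)) ^ 2‖
        ≤ γ / 2 * enorm2 d := by
    intro t
    have hWt : 0 < u t := hupos t
    have hsq : Real.sqrt (u t) ^ 2 = u t := Real.sq_sqrt hWt.le
    have hsp : 0 < Real.sqrt (u t) := Real.sqrt_pos.2 hWt
    have hcs : |fderiv ℝ W (s, p t) ((0 : ℝ), d)| ≤ γ * (u t * Real.sqrt (u t)) * enorm2 d := by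
      refine (cs_aux W (s, p t) d).trans ?_
      have h32 : (u t) ^ ((3 : ℝ) / 2) = u t * Real.sqrt (u t) := by
        rw [show (3 : ℝ) / 2 = 1 + 1 / 2 by norm_num, Real.rpow_add hWt, Real.rpow_one,
          ← Real.sqrt_eq_rpow]
      have := hWx (s, p t)
      rw [show W (s, p t) = u t from rfl, h32] at this
      exact mul_le_mul_of_nonneg_right this (Real.sqrt_nonneg _)
    rw [Real.norm_eq_abs, abs_div, abs_neg, abs_of_pos (pow_pos hsp 2),
      hsq, div_le_iff₀ hWt]
    rw [abs_mul, abs_of_pos (div_pos one_pos (mul_pos two_pos hsp))]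
    calc 1 / (2 * Real.sqrt (u t)) * |fderiv ℝ W (s, p t) ((0 : ℝ), d)|
        ≤ 1 / (2 * Real.sqrt (u t)) * (γ * (u t * Real.sqrt (u t)) * enorm2 d) := by
          exact mul_le_mul_of_nonneg_left hcs (div_pos one_pos (mul_pos two_pos hsp)).le
      _ = γ / 2 * enorm2 d * u t := by field_simp
  have key := Convex.norm_image_sub_le_of_norm_hasDerivWithin_le
    (f := h) (f' := fun t =>
      -(1 / (2 * Real.sqrt (u t)) * fderiv ℝ W (s, p t) ((0 : ℝ), d)) / (Real.sqrt (u t)) ^ 2)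
    (s := Set.univ) (fun t _ => (hder t).hasDerivWithinAt) (fun t _ => hbound t)
    convex_univ (Set.mem_univ (0 : ℝ)) (Set.mem_univ (1 : ℝ))
  have hp0 : p 0 = x₁ := by simp [hp]
  have hp1 : p 1 = x₂ := by simp [hp, hdd]
  have : |h 1 - h 0| ≤ γ / 2 * enorm2 d * 1 := by
    simpa [Real.norm_eq_abs] using key
  simpa [hh, hu, hp0, hp1] using this


/-- oscillation estimate for the weight `W` on a parabolic cylinder:
if `|D_s W| ≤ βW²` and `|∇_x W| ≤ γW^{3/2}` then, with
`τ = (4βℓ₁W(s₀,x₀))⁻¹` and `r = √3 (2ℓ₂γ W(s₀,x₀)^{1/2})⁻¹`,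
`((2ℓ₂−1)√3/(4ℓ₂)) W(s,x)^{1/2} ≤ W(s₀,x₀)^{1/2} ≤ ((2ℓ₂+1)√5/(4ℓ₂)) W(s,x)^{1/2}`
on the cylinder `{|s−s₀| < τ, |x−x₀| < r}`. -/
theorem statement9 (N : ℕ) (hN : 1 ≤ N)
    (W : Pt N → ℝ) (hWreg : ContDiff ℝ 1 W)
    (hWpos : ∀ q, 0 < W q)
    (β γ : ℝ) (hβ : 0 < β) (hγ : 0 < γ)
    (hWt : ∀ q, |pT W q| ≤ β * W q ^ 2)
    (hWx : ∀ q, enorm2 (gradX W q) ≤ γ * W q ^ ((3 : ℝ) / 2))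
    (s₀ : ℝ) (x₀ : Fin N → ℝ) (ℓ₁ ℓ₂ : ℝ) (hℓ₁ : 1 ≤ ℓ₁) (hℓ₂ : 1 ≤ ℓ₂)
    (τ r : ℝ)
    (hτ : τ = (4 * β * ℓ₁ * W (s₀, x₀))⁻¹)
    (hr : r = Real.sqrt 3 * (2 * ℓ₂ * γ * Real.sqrt (W (s₀, x₀)))⁻¹) :
    ∀ (s : ℝ) (x : Fin N → ℝ), |s - s₀| < τ → enorm2 (x - x₀) < r →
      ((2 * ℓ₂ - 1) * Real.sqrt 3 / (4 * ℓ₂)) * Real.sqrt (W (s, x)) ≤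
          Real.sqrt (W (s₀, x₀)) ∧
        Real.sqrt (W (s₀, x₀)) ≤
          ((2 * ℓ₂ + 1) * Real.sqrt 5 / (4 * ℓ₂)) * Real.sqrt (W (s, x)) := by
  intro s x hs hx
  have hW₀ := hWpos (s₀, x₀)
  have hW₁ := hWpos (s, x₀)
  have hW₂ := hWpos (s, x)
  set a := Real.sqrt (W (s₀, x₀)) with ha_def
  set b := Real.sqrt (W (s, x₀)) with hb_def
  set c := Real.sqrt (W (s, x)) with hc_def
  have ha : 0 < a := Real.sqrt_pos.2 hW₀
  have hb : 0 < b := Real.sqrt_pos.2 hW₁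
  have hc : 0 < c := Real.sqrt_pos.2 hW₂
  have hℓ₂0 : 0 < ℓ₂ := lt_of_lt_of_le one_pos hℓ₂
  have hℓ₁0 : 0 < ℓ₁ := lt_of_lt_of_le one_pos hℓ₁
  -- step 1 : time comparison
  have hA : |(W (s, x₀))⁻¹ - (W (s₀, x₀))⁻¹| ≤ (4 * W (s₀, x₀))⁻¹ := by
    refine (time_lip W hWreg hWpos β hWt x₀ s₀ s).trans ?_
    have h1 : β * |s - s₀| ≤ β * τ := mul_le_mul_of_nonneg_left hs.le hβ.le
    have h2 : β * τ = (4 * ℓ₁ * W (s₀, x₀))⁻¹ := by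
      rw [hτ]; field_simp
    have h3 : (4 * ℓ₁ * W (s₀, x₀))⁻¹ ≤ (4 * W (s₀, x₀))⁻¹ := by
      apply inv_anti₀ (by linarith)
      nlinarith
    linarith
  have hA' := abs_le.1 hA
  have h4W : (4 * W (s₀, x₀))⁻¹ = (1/4) * (W (s₀, x₀))⁻¹ := by
    rw [mul_inv]; ring
  have hWinv_lo : (3/4 : ℝ) * (W (s₀, x₀))⁻¹ ≤ (W (s, x₀))⁻¹ := by
    rw [h4W] at hA'; linarith [hA'.1]
  have hWinv_hi : (W (s, x₀))⁻¹ ≤ (5/4 : ℝ) * (W (s₀, x₀))⁻¹ := by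
    rw [h4W] at hA'; linarith [hA'.2]
  have h34 : Real.sqrt (3/4 : ℝ) = Real.sqrt 3 / 2 := by
    rw [show (3:ℝ)/4 = 3 * (1/2)^2 by norm_num, Real.sqrt_mul (by norm_num),
      Real.sqrt_sq (by norm_num)]
    ring
  have h54 : Real.sqrt (5/4 : ℝ) = Real.sqrt 5 / 2 := by
    rw [show (5:ℝ)/4 = 5 * (1/2)^2 by norm_num, Real.sqrt_mul (by norm_num),
      Real.sqrt_sq (by norm_num)]
    ring
  have hb_lo : Real.sqrt 3 / 2 * a⁻¹ ≤ b⁻¹ := by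
    have h := Real.sqrt_le_sqrt hWinv_lo
    rwa [Real.sqrt_mul (by norm_num), Real.sqrt_inv, Real.sqrt_inv, h34] at h
  have hb_hi : b⁻¹ ≤ Real.sqrt 5 / 2 * a⁻¹ := by
    have h := Real.sqrt_le_sqrt hWinv_hi
    rwa [Real.sqrt_mul (by norm_num), Real.sqrt_inv, Real.sqrt_inv, h54] at h
  -- step 2 : space comparison
  have hB : |c⁻¹ - b⁻¹| ≤ Real.sqrt 3 / (4 * ℓ₂) * a⁻¹ := by
    refine (space_lip W hWreg hWpos γ hγ hWx s x₀ x).trans ?_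
    have h1 : γ / 2 * enorm2 (x - x₀) ≤ γ / 2 * r :=
      mul_le_mul_of_nonneg_left hx.le (by linarith)
    have h2 : γ / 2 * r = Real.sqrt 3 / (4 * ℓ₂) * a⁻¹ := by
      rw [hr]
      field_simp
      ring
    linarith
  have hB' := abs_le.1 hB
  -- lower bound
  have hKc : (2 * ℓ₂ - 1) * Real.sqrt 3 / (4 * ℓ₂) * a⁻¹ ≤ c⁻¹ := by
    have hx3 : (2 * ℓ₂ - 1) * Real.sqrt 3 / (4 * ℓ₂) * a⁻¹
        = Real.sqrt 3 / 2 * a⁻¹ - Real.sqrt 3 / (4 * ℓ₂) * a⁻¹ := by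
      field_simp
      ring
    rw [hx3]
    linarith [hB'.1]
  -- upper bound
  have h35 : Real.sqrt 3 ≤ Real.sqrt 5 := Real.sqrt_le_sqrt (by norm_num)
  have hc4 : (0:ℝ) < 4 * ℓ₂ := by linarith
  have hKc2 : c⁻¹ ≤ (2 * ℓ₂ + 1) * Real.sqrt 5 / (4 * ℓ₂) * a⁻¹ := by
    have hmono : Real.sqrt 3 / (4 * ℓ₂) * a⁻¹ ≤ Real.sqrt 5 / (4 * ℓ₂) * a⁻¹ :=
      mul_le_mul_of_nonneg_right ((div_le_div_iff_of_pos_right hc4).2 h35) (inv_nonneg.2 ha.le)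
    have hx5 : (2 * ℓ₂ + 1) * Real.sqrt 5 / (4 * ℓ₂) * a⁻¹
        = Real.sqrt 5 / 2 * a⁻¹ + Real.sqrt 5 / (4 * ℓ₂) * a⁻¹ := by
      field_simp
      ring
    rw [hx5]
    linarith [hB'.2]
  constructor
  · have hKc' : (2 * ℓ₂ - 1) * Real.sqrt 3 / (4 * ℓ₂) / a ≤ 1 / c := by
      rw [div_eq_mul_inv _ a, one_div]; exact hKc
    have := (div_le_div_iff₀ ha hc).1 hKc'
    linarith
  · have hKc2' : 1 / c ≤ (2 * ℓ₂ + 1) * Real.sqrt 5 / (4 * ℓ₂) / a := by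
      rw [div_eq_mul_inv _ a, one_div]; exact hKc2
    have := (div_le_div_iff₀ hc ha).1 hKc2'
    linarith
end
end

section
/- Equip ℝ^{1+N} with the parabolic metric d((t,x),(s,y)) = max{|t − s|^{1/2}, |x − y|}, and for (s₀,x₀) ∈ ℝ^{1+N} and r > 0 let B_d((s₀,x₀), r) = (s₀ − r², s₀ + r²) × B(x₀, r) be the d-ball. Let ϱ : ℝ^{1+N} → (0, +∞) be bounded and Lipschitz continuous with respect to d with Lipschitz constant κ < 1, i.e. |ϱ(s,x) − ϱ(r,y)| ≤ κ d((s,x),(r,y)) for all points. Then there exists a sequence ((s_n, x_n)) in ℝ^{1+N} such that: (i) the balls B_d((s_n,x_n), ϱ(s_n,x_n)), n ∈ ℕ, cover ℝ^{1+N}; and (ii) for each λ ∈ [1, κ^{-1}) there exists a natural number ζ(κ, λ, N) such that every subset I ⊆ ℕ with ⋂_{n ∈ I} B_d((s_n,x_n), λ ϱ(s_n,x_n)) ≠ ∅ contains at most ζ(κ, λ, N) elements. -/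
noncomputable section
open MeasureTheory Real Set Filter ENNReal NNReal Matrix

/-- The parabolic distance `d((t,x),(s,y)) = max{|t−s|^{1/2}, |x−y|}` on `ℝ^{1+N}`. -/
def pdist {N : ℕ} (q r : Pt N) : ℝ :=
  max (Real.sqrt |q.1 - r.1|) (enorm2 (q.2 - r.2))

/-- The ball `B_d(c, r) = (c₁ − r², c₁ + r²) × B(c₂, r)` of the parabolic metric
(a parabolic cylinder). -/
def pball {N : ℕ} (c : Pt N) (r : ℝ) : Set (Pt N) :=
  {q : Pt N | c.1 - r ^ 2 < q.1 ∧ q.1 < c.1 + r ^ 2 ∧ enorm2 (q.2 - c.2) < r}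

/- ------------------- auxiliary lemmas ------------------- -/

namespace Statement19Aux

variable {N : ℕ}

/-- The identification of `Fin N → ℝ` with Euclidean space. -/
def toE {N : ℕ} (x : Fin N → ℝ) : EuclideanSpace ℝ (Fin N) :=
  (WithLp.equiv 2 (Fin N → ℝ)).symm x

lemma enorm2_eq (x : Fin N → ℝ) : enorm2 x = ‖toE x‖ := by
  rw [EuclideanSpace.norm_eq]
  unfold enorm2
  congr 1
  refine Finset.sum_congr rfl fun i _ => ?_
  rw [Real.norm_eq_abs, sq_abs, toE]
  rfl

lemma toE_sub (x y : Fin N → ℝ) : toE (x - y) = toE x - toE y := rfl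

lemma enorm2_nonneg (x : Fin N → ℝ) : 0 ≤ enorm2 x := Real.sqrt_nonneg _

lemma pdist_nonneg (q r : Pt N) : 0 ≤ pdist q r :=
  le_trans (Real.sqrt_nonneg _) (le_max_left _ _)

@[simp] lemma toE_zero : toE (0 : Fin N → ℝ) = 0 := rfl

lemma pdist_self (q : Pt N) : pdist q q = 0 := by
  simp [pdist, enorm2_eq, sub_self]

lemma pdist_comm (q r : Pt N) : pdist q r = pdist r q := by
  unfold pdist
  rw [abs_sub_comm, enorm2_eq, enorm2_eq, toE_sub, toE_sub, norm_sub_rev]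

lemma sqrt_add_le {x y : ℝ} (hx : 0 ≤ x) (hy : 0 ≤ y) :
    Real.sqrt (x + y) ≤ Real.sqrt x + Real.sqrt y := by
  have h : x + y ≤ (Real.sqrt x + Real.sqrt y) ^ 2 := by
    nlinarith [Real.sq_sqrt hx, Real.sq_sqrt hy, Real.sqrt_nonneg x, Real.sqrt_nonneg y]
  calc Real.sqrt (x + y) ≤ Real.sqrt ((Real.sqrt x + Real.sqrt y) ^ 2) := Real.sqrt_le_sqrt h
  _ = Real.sqrt x + Real.sqrt y := Real.sqrt_sq (by positivity)

lemma pdist_triangle (a b c : Pt N) : pdist a c ≤ pdist a b + pdist b c := by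
  unfold pdist
  apply max_le
  · calc Real.sqrt |a.1 - c.1| ≤ Real.sqrt (|a.1 - b.1| + |b.1 - c.1|) :=
        Real.sqrt_le_sqrt (abs_sub_le _ _ _)
    _ ≤ Real.sqrt |a.1 - b.1| + Real.sqrt |b.1 - c.1| :=
        sqrt_add_le (abs_nonneg _) (abs_nonneg _)
    _ ≤ _ := add_le_add (le_max_left _ _) (le_max_left _ _)
  · calc enorm2 (a.2 - c.2) = ‖toE a.2 - toE c.2‖ := by rw [enorm2_eq, toE_sub]
    _ ≤ ‖toE a.2 - toE b.2‖ + ‖toE b.2 - toE c.2‖ := norm_sub_le_norm_sub_add_norm_sub _ _ _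
    _ = enorm2 (a.2 - b.2) + enorm2 (b.2 - c.2) := by rw [enorm2_eq, enorm2_eq, toE_sub, toE_sub]
    _ ≤ _ := add_le_add (le_max_right _ _) (le_max_right _ _)

lemma mem_pball {c q : Pt N} {r : ℝ} (hr : 0 < r) :
    q ∈ pball c r ↔ pdist q c < r := by
  simp only [pball, Set.mem_setOf_eq, pdist, max_lt_iff]
  rw [Real.sqrt_lt' hr, abs_sub_lt_iff]
  constructor
  · intro h
    exact ⟨⟨by linarith [h.1, h.2.1], by linarith [h.1, h.2.1]⟩, h.2.2⟩
  · intro h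
    exact ⟨by linarith [h.1.1, h.1.2], by linarith [h.1.1, h.1.2], h.2⟩

lemma pball_prod (c : Pt N) (r : ℝ) :
    pball c r = Set.Ioo (c.1 - r ^ 2) (c.1 + r ^ 2) ×ˢ {x | enorm2 (x - c.2) < r} := by
  ext q
  simp only [pball, Set.mem_setOf_eq, Set.mem_prod, Set.mem_Ioo]
  tauto

lemma continuous_enorm2 : Continuous (enorm2 (N := N)) := by
  unfold enorm2
  exact Real.continuous_sqrt.comp (continuous_finset_sum _ fun i _ => (continuous_apply i).pow 2)

lemma measurableSet_spatial (c : Fin N → ℝ) (r : ℝ) :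
    MeasurableSet {x : Fin N → ℝ | enorm2 (x - c) < r} :=
  measurableSet_lt ((continuous_enorm2.comp (continuous_id.sub continuous_const)).measurable)
    measurable_const

lemma measurableSet_pball (c : Pt N) (r : ℝ) : MeasurableSet (pball c r) := by
  rw [pball_prod]
  exact measurableSet_Ioo.prod (measurableSet_spatial c.2 r)

/-- The volume of the Euclidean unit ball in dimension `N`. -/
def Vn (N : ℕ) : ℝ≥0∞ := volume (Metric.ball (0 : EuclideanSpace ℝ (Fin N)) 1)

lemma Vn_pos (N : ℕ) : 0 < Vn N := Metric.measure_ball_pos _ _ one_pos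

lemma Vn_lt_top (N : ℕ) : Vn N < ⊤ := measure_ball_lt_top

lemma spatial_vol (hN : 1 ≤ N) (c : Fin N → ℝ) {r : ℝ} (hr : 0 < r) :
    volume {x : Fin N → ℝ | enorm2 (x - c) < r} = ENNReal.ofReal (r ^ N) * Vn N := by
  haveI : Nonempty (Fin N) := ⟨⟨0, hN⟩⟩
  set S := {x : Fin N → ℝ | enorm2 (x - c) < r} with hS
  have hpre : ((MeasurableEquiv.toLp 2 (Fin N → ℝ)).symm) ⁻¹' S = Metric.ball (toE c) r := by
    ext y
    simp only [Set.mem_preimage, hS, Set.mem_setOf_eq, Metric.mem_ball, dist_eq_norm]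
    constructor <;> intro h
    · calc ‖y - toE c‖ = enorm2 (((MeasurableEquiv.toLp 2 (Fin N → ℝ)).symm) y - c) := by
            rw [enorm2_eq, toE_sub]
            rfl
      _ < r := h
    · calc enorm2 (((MeasurableEquiv.toLp 2 (Fin N → ℝ)).symm) y - c) = ‖y - toE c‖ := by
            rw [enorm2_eq, toE_sub]
            rfl
      _ < r := h
  have hmp := (EuclideanSpace.volume_preserving_symm_measurableEquiv_toLp (Fin N)).measure_preimage
    (s := S) (measurableSet_spatial c r).nullMeasurableSet
  rw [← hmp, hpre, Measure.addHaar_ball volume (toE c) hr.le, finrank_euclideanSpace_fin, Vn]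

lemma pball_vol (hN : 1 ≤ N) (c : Pt N) {r : ℝ} (hr : 0 < r) :
    volume (pball c r) = ENNReal.ofReal (2 * r ^ 2 * r ^ N) * Vn N := by
  rw [pball_prod, Measure.volume_eq_prod, Measure.prod_prod, Real.volume_Ioo,
    spatial_vol hN c.2 hr]
  rw [show c.1 + r ^ 2 - (c.1 - r ^ 2) = 2 * r ^ 2 by ring]
  rw [← mul_assoc, ← ENNReal.ofReal_mul (by positivity)]

/-- The main counting lemma: an `ε`-separated set within `pdist`-distance `R` of a point
has at most `m` elements, provided `((2R+ε)/ε)^(N+2) ≤ m`. -/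
lemma count_lemma (hN : 1 ≤ N) (T : Set (Pt N)) (q : Pt N) (ε R : ℝ)
    (hε : 0 < ε) (hR : 0 ≤ R)
    (hsep : ∀ a ∈ T, ∀ b ∈ T, a ≠ b → ε ≤ pdist a b)
    (hbd : ∀ a ∈ T, pdist a q ≤ R) (m : ℕ)
    (hm : ((2 * R + ε) / ε) ^ (N + 2) ≤ (m : ℝ)) : T.encard ≤ (m : ℕ∞) := by
  by_contra hcon
  push_neg at hcon
  have hle : ((m + 1 : ℕ) : ℕ∞) ≤ T.encard := by
    push_cast
    exact Order.add_one_le_of_lt hcon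
  obtain ⟨J, hJT, hJcard⟩ := Set.exists_subset_encard_eq hle
  have hJfin : J.Finite := Set.finite_of_encard_eq_coe hJcard
  have hcard : hJfin.toFinset.card = m + 1 := by
    rw [hJfin.encard_eq_coe_toFinset_card] at hJcard
    exact_mod_cast hJcard
  have hs0 : 0 < R + ε / 2 := by positivity
  have hε2 : (0 : ℝ) < ε / 2 := by positivity
  -- pairwise disjoint small balls
  have hdisj : (↑hJfin.toFinset : Set (Pt N)).PairwiseDisjoint (fun a => pball a (ε / 2)) := by
    intro a ha b hb hab
    rw [Set.Finite.coe_toFinset] at ha hb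
    refine Set.disjoint_left.mpr fun y hya hyb => ?_
    have h1 := (mem_pball hε2).mp hya
    have h2 := (mem_pball hε2).mp hyb
    have h3 := hsep a (hJT ha) b (hJT hb) hab
    have h4 := pdist_triangle a y b
    rw [pdist_comm a y] at h4
    linarith
  -- each small ball is inside the big ball
  have hsub : (⋃ a ∈ hJfin.toFinset, pball a (ε / 2)) ⊆ pball q (R + ε / 2) := by
    intro y hy
    simp only [Set.mem_iUnion] at hy
    obtain ⟨a, ha, hya⟩ := hy
    rw [Set.Finite.mem_toFinset] at ha
    have h1 := (mem_pball hε2).mp hya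
    have h2 := hbd a (hJT ha)
    have h3 := pdist_triangle y a q
    exact (mem_pball hs0).mpr (by linarith)
  have hsum : ∑ a ∈ hJfin.toFinset, volume (pball a (ε / 2)) ≤ volume (pball q (R + ε / 2)) := by
    rw [← measure_biUnion_finset hdisj (fun a _ => measurableSet_pball a (ε / 2))]
    exact measure_mono hsub
  have hval : ∀ a : Pt N, volume (pball a (ε / 2)) =
      ENNReal.ofReal (2 * (ε / 2) ^ 2 * (ε / 2) ^ N) * Vn N := fun a => pball_vol hN a hε2
  rw [Finset.sum_congr rfl (fun a _ => hval a), Finset.sum_const, hcard,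
      pball_vol hN q hs0, nsmul_eq_mul, ← mul_assoc] at hsum
  have hVn0 : Vn N ≠ 0 := (Vn_pos N).ne'
  have hVnt : Vn N ≠ ⊤ := (Vn_lt_top N).ne
  rw [ENNReal.mul_le_mul_iff_left hVn0 hVnt] at hsum
  rw [show ((m + 1 : ℕ) : ℝ≥0∞) = ENNReal.ofReal ((m + 1 : ℕ) : ℝ) from
      (ENNReal.ofReal_natCast _).symm, ← ENNReal.ofReal_mul (by positivity)] at hsum
  have hreal : ((m + 1 : ℕ) : ℝ) * (2 * (ε / 2) ^ 2 * (ε / 2) ^ N) ≤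
      2 * (R + ε / 2) ^ 2 * (R + ε / 2) ^ N :=
    (ENNReal.ofReal_le_ofReal_iff (by positivity)).mp hsum
  have hpow : ((m : ℝ) + 1) * (ε / 2) ^ (N + 2) ≤ (R + ε / 2) ^ (N + 2) := by
    have e1 : (ε / 2) ^ (N + 2) = (ε / 2) ^ N * (ε / 2) ^ 2 := by ring
    have e2 : (R + ε / 2) ^ (N + 2) = (R + ε / 2) ^ N * (R + ε / 2) ^ 2 := by ring
    rw [e1, e2]
    push_cast at hreal
    nlinarith
  have hdivpos : (0 : ℝ) < (ε / 2) ^ (N + 2) := by positivity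
  have h5 : ((m : ℝ) + 1) ≤ ((R + ε / 2) / (ε / 2)) ^ (N + 2) := by
    rw [div_pow, le_div_iff₀ hdivpos]
    linarith
  have h6 : (R + ε / 2) / (ε / 2) = (2 * R + ε) / ε := by
    field_simp
  rw [h6] at h5
  linarith

end Statement19Aux

open Statement19Aux

/-- a parabolic variant of the Besicovitch covering theorem: if
`ϱ : ℝ^{1+N} → (0,∞)` is bounded and `κ`-Lipschitz for the parabolic metric with
`κ < 1`, then there is a sequence of centers `(s_n, x_n)` such that the cylinders
`B_d((s_n,x_n), ϱ(s_n,x_n))` cover `ℝ^{1+N}` and, for every `λ ∈ [1, κ⁻¹)`, there is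
`ζ(κ,λ,N) ∈ ℕ` such that any set of indices whose dilated cylinders
`B_d((s_n,x_n), λϱ(s_n,x_n))` have a common point has at most `ζ(κ,λ,N)` elements. -/
theorem statement19 (N : ℕ) (hN : 1 ≤ N)
    (ϱ : Pt N → ℝ) (hϱpos : ∀ q, 0 < ϱ q)
    (hϱbdd : ∃ Mb : ℝ, ∀ q, ϱ q ≤ Mb)
    (κ : ℝ) (hκ0 : 0 ≤ κ) (hκ1 : κ < 1)
    (hLip : ∀ q r : Pt N, |ϱ q - ϱ r| ≤ κ * pdist q r) :
    ∃ c : ℕ → Pt N,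
      (∀ q : Pt N, ∃ n : ℕ, q ∈ pball (c n) (ϱ (c n))) ∧
      ∀ lam : ℝ, 1 ≤ lam → lam * κ < 1 →
        ∃ ζ : ℕ, ∀ I : Set ℕ,
          (⋂ n ∈ I, pball (c n) (lam * ϱ (c n))).Nonempty → I.encard ≤ ζ := by
  classical
  -- the family of "well separated" sets of centers
  set S : Set (Set (Pt N)) :=
    {C | ∀ a ∈ C, ∀ b ∈ C, a ≠ b → max (ϱ a) (ϱ b) / 2 ≤ pdist a b} with hSdef
  -- Zorn's lemma: a maximal well separated set
  obtain ⟨C, hM⟩ := zorn_subset S (by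
    intro ch hch hchain
    refine ⟨⋃₀ ch, ?_, fun s hs => Set.subset_sUnion_of_mem hs⟩
    intro a ha b hb hab
    obtain ⟨s, hs, has⟩ := ha
    obtain ⟨t, ht, hbt⟩ := hb
    rcases hchain.total hs ht with h | h
    · exact hch ht a (h has) b hbt hab
    · exact hch hs a has b (h hbt) hab)
  have hC : C ∈ S := hM.1
  -- the covering property of the maximal set
  have hcov : ∀ q : Pt N, ∃ a ∈ C, pdist q a < ϱ a := by
    intro q
    by_cases hqC : q ∈ C
    · exact ⟨q, hqC, by rw [pdist_self]; exact hϱpos q⟩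
    by_contra hno
    push_neg at hno
    have hins : insert q C ∈ S := by
      intro a ha b hb hab
      rcases Set.mem_insert_iff.mp ha with rfl | haC
      · rcases Set.mem_insert_iff.mp hb with rfl | hbC
        · exact absurd rfl hab
        · -- a = q, b ∈ C
          have h1 : ϱ b ≤ pdist a b := hno b hbC
          have h2 : ϱ a - ϱ b ≤ κ * pdist a b := le_trans (le_abs_self _) (hLip a b)
          have hp0 : 0 ≤ pdist a b := pdist_nonneg a b
          have h3 : ϱ a ≤ (1 + κ) * pdist a b := by nlinarith
          have h4 : max (ϱ a) (ϱ b) ≤ 2 * pdist a b := by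
            apply max_le <;> nlinarith
          linarith
      · rcases Set.mem_insert_iff.mp hb with rfl | hbC
        · -- b = q, a ∈ C
          have h1 : ϱ a ≤ pdist b a := hno a haC
          rw [pdist_comm b a] at h1
          have h2 : ϱ b - ϱ a ≤ κ * pdist b a := le_trans (le_abs_self _) (hLip b a)
          rw [pdist_comm b a] at h2
          have hp0 : 0 ≤ pdist a b := pdist_nonneg a b
          have h3 : ϱ b ≤ (1 + κ) * pdist a b := by nlinarith
          have h4 : max (ϱ a) (ϱ b) ≤ 2 * pdist a b := by
            apply max_le <;> nlinarith
          linarith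
        · exact hC a haC b hbC hab
    have := hM.2 hins (Set.subset_insert q C)
    exact hqC (this (Set.mem_insert q C))
  -- C is countable
  obtain ⟨Mb, hMb⟩ := hϱbdd
  have hMb0 : 0 < Mb := lt_of_lt_of_le (hϱpos ((0 : ℝ), (0 : Fin N → ℝ))) (hMb _)
  set z : Pt N := ((0 : ℝ), (0 : Fin N → ℝ)) with hz
  have hpiece : ∀ k m : ℕ,
      ({a ∈ C | 1 / ((k : ℝ) + 1) ≤ ϱ a ∧ pdist a z ≤ (m : ℝ)}).Finite := by
    intro k m
    set ε : ℝ := 1 / (2 * ((k : ℝ) + 1)) with hεdef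
    have hε : 0 < ε := by positivity
    have hcount := count_lemma hN {a ∈ C | 1 / ((k : ℝ) + 1) ≤ ϱ a ∧ pdist a z ≤ (m : ℝ)}
      z ε (m : ℝ) hε (Nat.cast_nonneg m)
      (by
        rintro a ⟨haC, hak, -⟩ b ⟨hbC, hbk, -⟩ hab
        have h1 := hC a haC b hbC hab
        have h2 : 1 / ((k : ℝ) + 1) ≤ max (ϱ a) (ϱ b) := le_trans hak (le_max_left _ _)
        have hk1 : ((k : ℝ) + 1) ≠ 0 := by positivity
        have h3 : ε = (1 / ((k : ℝ) + 1)) / 2 := by rw [hεdef]; field_simp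
        rw [h3]
        linarith)
      (by rintro a ⟨-, -, ham⟩; exact ham)
      ⌈((2 * (m : ℝ) + ε) / ε) ^ (N + 2)⌉₊ (Nat.le_ceil _)
    exact (Set.encard_le_coe_iff.mp hcount).1
  have hCcount : C.Countable := by
    have hCsub : C ⊆ ⋃ (k : ℕ), ⋃ (m : ℕ),
        {a ∈ C | 1 / ((k : ℝ) + 1) ≤ ϱ a ∧ pdist a z ≤ (m : ℝ)} := by
      intro a haC
      obtain ⟨k, hk⟩ := exists_nat_one_div_lt (hϱpos a)
      obtain ⟨m, hm⟩ := exists_nat_ge (pdist a z)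
      simp only [Set.mem_iUnion]
      exact ⟨k, m, haC, hk.le, hm⟩
    exact Set.Countable.mono hCsub
      (Set.countable_iUnion fun k => Set.countable_iUnion fun m => (hpiece k m).countable)
  -- C is infinite
  have hCinf : C.Infinite := by
    have hpick : ∀ n : ℕ, ∃ a ∈ C, pdist ((n : ℝ) * (2 * Mb ^ 2 + 1), (0 : Fin N → ℝ)) a < ϱ a :=
      fun n => hcov _
    choose f hfC hfd using hpick
    have htime : ∀ n : ℕ, |(n : ℝ) * (2 * Mb ^ 2 + 1) - (f n).1| < Mb ^ 2 := by
      intro n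
      have h1 : Real.sqrt |(n : ℝ) * (2 * Mb ^ 2 + 1) - (f n).1| < Mb :=
        lt_of_lt_of_le (lt_of_le_of_lt (le_max_left _ _) (hfd n)) (hMb _)
      exact (Real.sqrt_lt' hMb0).mp h1
    have hinj : Function.Injective f := by
      intro n m hnm
      by_contra hne
      have h1 := htime n
      have h2 := htime m
      rw [hnm] at h1
      have h3 : |(n : ℝ) * (2 * Mb ^ 2 + 1) - (m : ℝ) * (2 * Mb ^ 2 + 1)| < 2 * Mb ^ 2 := by
        have := abs_sub_le ((n : ℝ) * (2 * Mb ^ 2 + 1)) (f m).1 ((m : ℝ) * (2 * Mb ^ 2 + 1))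
        rw [abs_sub_comm ((f m).1)] at this
        linarith
      have h4 : (1 : ℝ) ≤ |(n : ℝ) - (m : ℝ)| := by
        have hne' : (n : ℤ) ≠ (m : ℤ) := by exact_mod_cast hne
        have hint := Int.one_le_abs (sub_ne_zero.mpr hne')
        calc (1 : ℝ) = ((1 : ℤ) : ℝ) := by norm_num
        _ ≤ ((|(n : ℤ) - (m : ℤ)| : ℤ) : ℝ) := by exact_mod_cast hint
        _ = |(n : ℝ) - (m : ℝ)| := by push_cast; ring
      have h5 : |(n : ℝ) * (2 * Mb ^ 2 + 1) - (m : ℝ) * (2 * Mb ^ 2 + 1)| =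
          |(n : ℝ) - (m : ℝ)| * (2 * Mb ^ 2 + 1) := by
        have e1 : (n : ℝ) * (2 * Mb ^ 2 + 1) - (m : ℝ) * (2 * Mb ^ 2 + 1) =
            ((n : ℝ) - (m : ℝ)) * (2 * Mb ^ 2 + 1) := by ring
        rw [e1, abs_mul, abs_of_pos (show (0 : ℝ) < 2 * Mb ^ 2 + 1 by positivity)]
      nlinarith
    exact Set.infinite_of_injective_forall_mem hinj hfC
  -- enumerate C injectively
  haveI := hCcount.to_subtype
  haveI := hCinf.to_subtype
  obtain ⟨dC⟩ := (nonempty_denumerable_iff (α := ↥C)).mpr ⟨inferInstance, inferInstance⟩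
  set e : ↥C ≃ ℕ := Denumerable.eqv ↥C with he
  set c : ℕ → Pt N := fun n => ((e.symm n : ↥C) : Pt N) with hc
  have hcmem : ∀ n, c n ∈ C := fun n => (e.symm n).2
  have hcinj : Function.Injective c := fun a b h =>
    e.symm.injective (Subtype.coe_injective h)
  have hcsurj : ∀ x ∈ C, ∃ n, c n = x := by
    intro x hx
    exact ⟨e ⟨x, hx⟩, by rw [hc]; simp⟩
  refine ⟨c, ?_, ?_⟩
  · -- covering
    intro q
    obtain ⟨a, haC, hqa⟩ := hcov q
    obtain ⟨n, rfl⟩ := hcsurj a haC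
    exact ⟨n, (mem_pball (hϱpos _)).mpr hqa⟩
  · -- bounded overlap
    intro lam hlam1 hlamκ
    have hlam0 : 0 < lam := lt_of_lt_of_le one_pos hlam1
    have h1mκ : 0 < 1 - lam * κ := by linarith
    have h1pκ : 0 < 1 + lam * κ := by positivity
    set K : ℝ := 4 * lam * (1 + lam * κ) / (1 - lam * κ) + 1 with hK
    refine ⟨⌈K ^ (N + 2)⌉₊, ?_⟩
    rintro I ⟨q, hq⟩
    have hmem : ∀ n ∈ I, pdist q (c n) < lam * ϱ (c n) := by
      intro n hn
      have : q ∈ pball (c n) (lam * ϱ (c n)) := by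
        exact Set.mem_iInter₂.mp hq n hn
      exact (mem_pball (mul_pos hlam0 (hϱpos _))).mp this
    set ρ : ℝ := ϱ q with hρ
    have hρ0 : 0 < ρ := hϱpos q
    have hup : ∀ n ∈ I, ϱ (c n) ≤ ρ / (1 - lam * κ) := by
      intro n hn
      have hl := le_trans (le_abs_self _) (hLip (c n) q)
      rw [pdist_comm (c n) q] at hl
      have h2 : κ * pdist q (c n) ≤ κ * (lam * ϱ (c n)) :=
        mul_le_mul_of_nonneg_left (hmem n hn).le hκ0
      rw [le_div_iff₀ h1mκ]
      nlinarith
    have hlo : ∀ n ∈ I, ρ / (1 + lam * κ) ≤ ϱ (c n) := by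
      intro n hn
      have hl := le_trans (le_abs_self _) (hLip q (c n))
      have h2 : κ * pdist q (c n) ≤ κ * (lam * ϱ (c n)) :=
        mul_le_mul_of_nonneg_left (hmem n hn).le hκ0
      rw [div_le_iff₀ h1pκ]
      nlinarith
    set ε : ℝ := ρ / (2 * (1 + lam * κ)) with hεd
    set R : ℝ := lam * ρ / (1 - lam * κ) with hRd
    have hε : 0 < ε := by positivity
    have hR : 0 ≤ R := by positivity
    have hcount := count_lemma hN (c '' I) q ε R hε hR
      (by
        rintro a ⟨n, hn, rfl⟩ b ⟨m, hm, rfl⟩ hab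
        have h1 := hC (c n) (hcmem n) (c m) (hcmem m) hab
        have h2 : ρ / (1 + lam * κ) ≤ max (ϱ (c n)) (ϱ (c m)) :=
          le_trans (hlo n hn) (le_max_left _ _)
        have h3 : (ρ / (1 + lam * κ)) / 2 = ε := by rw [div_div, hεd, mul_comm]
        linarith)
      (by
        rintro a ⟨n, hn, rfl⟩
        rw [pdist_comm]
        have h1 := (hmem n hn).le
        have h2 : lam * ϱ (c n) ≤ lam * (ρ / (1 - lam * κ)) :=
          mul_le_mul_of_nonneg_left (hup n hn) hlam0.le
        rw [hRd]
        rw [show lam * ρ / (1 - lam * κ) = lam * (ρ / (1 - lam * κ)) by ring]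
        linarith)
      ⌈K ^ (N + 2)⌉₊
      (by
        have heq : (2 * R + ε) / ε = K := by
          rw [hεd, hRd, hK]
          field_simp
          ring
        rw [heq]
        exact Nat.le_ceil _)
    rwa [(Set.InjOn.encard_image (hcinj.injOn))] at hcount
end
end
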